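/- arXiv:1903.04100 — 10 statements merged into one kernel-verified Lean document; each statement's English description precedes it below -/
import Mathlib

section
/- Let f : ℝⁿ → ℝ be twice continuously differentiable, m > 0, γ ≥ 0, h > 0. Define the classical-momentum (heavy-ball) step Ψ : ℝⁿ × ℝⁿ → ℝⁿ × ℝⁿ by Ψ(x, p) = (X, P) where P = e^{−γh} p − h ∇f(x) and X = x + (h/m) P. Then Ψ is a conformal symplectic map with factor e^{−γh}: for every (x, p) and all tangent vectors ξ, η ∈ ℝⁿ × ℝⁿ, ω(DΨ(x,p) ξ, DΨ(x,p) η) = e^{−γh} ω(ξ, η), where DΨ(x,p) denotes the Fréchet derivative of Ψ at (x, p). -/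
open scoped InnerProductSpace

/-- The standard symplectic form on `ℝⁿ × ℝⁿ`: `ω((a,b),(c,d)) = ⟨a,d⟩ − ⟨b,c⟩`. -/
noncomputable def sympForm {n : ℕ}
    (u v : EuclideanSpace ℝ (Fin n) × EuclideanSpace ℝ (Fin n)) : ℝ :=
  ⟪u.1, v.2⟫_ℝ - ⟪u.2, v.1⟫_ℝ

/-- The inverse of `toDual` as a continuous `ℝ`-linear map. -/
noncomputable def dualToVec (E : Type*) [NormedAddCommGroup E] [InnerProductSpace ℝ E]
    [CompleteSpace E] : StrongDual ℝ E →L[ℝ] E where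
  toFun φ := (InnerProductSpace.toDual ℝ E).symm φ
  map_add' φ ψ := by simp
  map_smul' c φ := by
    simp [LinearIsometryEquiv.map_smulₛₗ, starRingEnd_apply]
  cont := (InnerProductSpace.toDual ℝ E).symm.continuous

lemma inner_dualToVec {E : Type*} [NormedAddCommGroup E] [InnerProductSpace ℝ E]
    [CompleteSpace E] (φ : StrongDual ℝ E) (w : E) :
    ⟪dualToVec E φ, w⟫_ℝ = φ w :=
  InnerProductSpace.toDual_symm_apply

lemma gradient_eq_dualToVec {E : Type*} [NormedAddCommGroup E] [InnerProductSpace ℝ E]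
    [CompleteSpace E] (f : E → ℝ) (x : E) :
    gradient f x = dualToVec E (fderiv ℝ f x) := rfl

set_option maxHeartbeats 1000000 in
/-- the heavy-ball (classical momentum) step
`P = e^{−γh} p − h ∇f(x)`, `X = x + (h/m) P` is conformal symplectic with
factor `e^{−γh}`. -/
theorem heavyBall_conformal_symplectic
    {n : ℕ} (f : EuclideanSpace ℝ (Fin n) → ℝ) (hf : ContDiff ℝ 2 f)
    (m γ h : ℝ) (hm : 0 < m) (hγ : 0 ≤ γ) (hh : 0 < h)
    (Ψ : EuclideanSpace ℝ (Fin n) × EuclideanSpace ℝ (Fin n) →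
         EuclideanSpace ℝ (Fin n) × EuclideanSpace ℝ (Fin n))
    (hΨ : ∀ x p, Ψ (x, p) =
      (x + (h / m) • (Real.exp (-γ * h) • p - h • gradient f x),
        Real.exp (-γ * h) • p - h • gradient f x)) :
    ∀ (z ξ η : EuclideanSpace ℝ (Fin n) × EuclideanSpace ℝ (Fin n)),
      sympForm (fderiv ℝ Ψ z ξ) (fderiv ℝ Ψ z η)
        = Real.exp (-γ * h) * sympForm ξ η := by
  intro z ξ η
  have : True := trivial
  set c := Real.exp (-γ * h) with hc
  have hΨ' : Ψ = fun q : (EuclideanSpace ℝ (Fin n)) × (EuclideanSpace ℝ (Fin n)) =>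
      (q.1 + (h / m) • (c • q.2 - h • gradient f q.1),
        c • q.2 - h • gradient f q.1) := by
    funext q
    rw [← hΨ q.1 q.2]
  subst hΨ'
  -- second derivative of f
  have hf1 : ContDiff ℝ 1 (fderiv ℝ f) := hf.fderiv_right (by norm_num)
  have hgrad : ∀ x : (EuclideanSpace ℝ (Fin n)), HasFDerivAt (gradient f)
      ((dualToVec (EuclideanSpace ℝ (Fin n))).comp (fderiv ℝ (fderiv ℝ f) x)) x := by
    intro x
    have h1 : HasFDerivAt (fderiv ℝ f) (fderiv ℝ (fderiv ℝ f) x) x :=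
      (hf1.differentiable one_ne_zero x).hasFDerivAt
    have := (dualToVec (EuclideanSpace ℝ (Fin n))).hasFDerivAt.comp x h1
    rw [show gradient f = _ from funext (gradient_eq_dualToVec f)]
    exact this
  set H : (EuclideanSpace ℝ (Fin n)) →L[ℝ] (EuclideanSpace ℝ (Fin n)) := (dualToVec (EuclideanSpace ℝ (Fin n))).comp (fderiv ℝ (fderiv ℝ f) z.1) with hH
  -- symmetry of the Hessian
  have hsymm : ∀ v w : (EuclideanSpace ℝ (Fin n)), ⟪H v, w⟫_ℝ = ⟪v, H w⟫_ℝ := by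
    intro v w
    have hs : IsSymmSndFDerivAt ℝ f z.1 :=
      hf.contDiffAt.isSymmSndFDerivAt (by norm_num)
    rw [real_inner_comm (H w) v]
    show ⟪dualToVec (EuclideanSpace ℝ (Fin n)) (fderiv ℝ (fderiv ℝ f) z.1 v), w⟫_ℝ
      = ⟪dualToVec (EuclideanSpace ℝ (Fin n)) (fderiv ℝ (fderiv ℝ f) z.1 w), v⟫_ℝ
    rw [inner_dualToVec, inner_dualToVec]
    exact hs v w
  -- derivative of Ψ
  set A : (EuclideanSpace ℝ (Fin n)) × (EuclideanSpace ℝ (Fin n)) →L[ℝ] (EuclideanSpace ℝ (Fin n)) :=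
    c • ContinuousLinearMap.snd ℝ (EuclideanSpace ℝ (Fin n)) (EuclideanSpace ℝ (Fin n)) - h • H.comp (ContinuousLinearMap.fst ℝ (EuclideanSpace ℝ (Fin n)) (EuclideanSpace ℝ (Fin n))) with hA
  have hAder : HasFDerivAt (fun q : (EuclideanSpace ℝ (Fin n)) × (EuclideanSpace ℝ (Fin n)) => c • q.2 - h • gradient f q.1) A z := by
    have h2 : HasFDerivAt (fun q : (EuclideanSpace ℝ (Fin n)) × (EuclideanSpace ℝ (Fin n)) => gradient f q.1)
        (H.comp (ContinuousLinearMap.fst ℝ (EuclideanSpace ℝ (Fin n)) (EuclideanSpace ℝ (Fin n)))) z :=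
      (hgrad z.1).comp z (hasFDerivAt_fst)
    exact ((hasFDerivAt_snd.const_smul c).sub (h2.const_smul h))
  have hΨder : HasFDerivAt (fun q : (EuclideanSpace ℝ (Fin n)) × (EuclideanSpace ℝ (Fin n)) =>
      (q.1 + (h / m) • (c • q.2 - h • gradient f q.1), c • q.2 - h • gradient f q.1))
      ((ContinuousLinearMap.fst ℝ (EuclideanSpace ℝ (Fin n)) (EuclideanSpace ℝ (Fin n)) + (h / m) • A).prod A) z :=
    HasFDerivAt.prodMk (hasFDerivAt_fst.add (hAder.const_smul (h / m))) hAder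
  rw [hΨder.fderiv]
  -- now pure linear algebra
  simp only [ContinuousLinearMap.prod_apply, ContinuousLinearMap.add_apply,
    ContinuousLinearMap.coe_fst', ContinuousLinearMap.smul_apply, hA,
    ContinuousLinearMap.sub_apply, ContinuousLinearMap.coe_snd',
    ContinuousLinearMap.coe_comp', Function.comp_apply, sympForm]
  set a := ξ.1; set b := ξ.2; set a' := η.1; set b' := η.2
  set u := c • b - h • H a with hu
  set v := c • b' - h • H a' with hv
  simp only [inner_add_left, inner_add_right, real_inner_smul_left, real_inner_smul_right]
  have huv : ⟪u, v⟫_ℝ = ⟪v, u⟫_ℝ := real_inner_comm v u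
  have h1 : ⟪a, v⟫_ℝ - ⟪u, a'⟫_ℝ = c * (⟪a, b'⟫_ℝ - ⟪b, a'⟫_ℝ) := by
    rw [hu, hv]
    simp only [inner_sub_left, inner_sub_right, real_inner_smul_left, real_inner_smul_right]
    rw [hsymm a a']
    ring
  nlinarith [h1, huv]
end

section
/- Let f : ℝⁿ → ℝ be twice continuously differentiable, m > 0, γ ≥ 0, c > 0, h > 0. Define the relativistic heavy-ball step Ψ : ℝⁿ × ℝⁿ → ℝⁿ × ℝⁿ by Ψ(x, p) = (X, P) where P = e^{−γh} p − h ∇f(x) and X = x + h c P / √(‖P‖² + m²c²). Then Ψ is conformal symplectic with factor e^{−γh}: for every (x, p) and all ξ, η ∈ ℝⁿ × ℝⁿ, ω(DΨ(x,p) ξ, DΨ(x,p) η) = e^{−γh} ω(ξ, η). -/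
open scoped InnerProductSpace

section Aux

variable {F : Type*} [NormedAddCommGroup F] [InnerProductSpace ℝ F] [CompleteSpace F]

open InnerProductSpace

/-- `toDual.symm` as a real linear isometry equivalence. -/
noncomputable def dualIso (F : Type*) [NormedAddCommGroup F] [InnerProductSpace ℝ F]
    [CompleteSpace F] : StrongDual ℝ F ≃ₗᵢ[ℝ] F :=
  (toDual ℝ F).symm

lemma dualIso_inner (y : StrongDual ℝ F) (v : F) :
    ⟪dualIso F y, v⟫_ℝ = y v :=
  toDual_symm_apply

/-- The gradient of a `C²` function is differentiable, with derivative the second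
derivative transferred through `toDual.symm`. -/
lemma grad_hasFDerivAt (g : F → ℝ) (hg : ContDiff ℝ 2 g) (a : F) :
    HasFDerivAt (gradient g)
      (((dualIso F : StrongDual ℝ F →L[ℝ] F)).comp
        (fderiv ℝ (fderiv ℝ g) a)) a := by
  have hd1 : ContDiff ℝ 1 (fderiv ℝ g) := hg.fderiv_right (by norm_num)
  have hdiff : DifferentiableAt ℝ (fderiv ℝ g) a := (hd1.differentiable one_ne_zero) a
  have h1 : HasFDerivAt (dualIso F ∘ fderiv ℝ g)
      (((dualIso F : StrongDual ℝ F →L[ℝ] F)).comp (fderiv ℝ (fderiv ℝ g) a)) a :=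
    ((dualIso F).comp_hasFDerivAt_iff).mpr hdiff.hasFDerivAt
  exact h1

/-- The derivative of the gradient of a `C²` function is self-adjoint. -/
lemma grad_fderiv_symm (g : F → ℝ) (hg : ContDiff ℝ 2 g) (a : F) (u v : F) :
    ⟪fderiv ℝ (gradient g) a u, v⟫_ℝ = ⟪fderiv ℝ (gradient g) a v, u⟫_ℝ := by
  have hA := grad_hasFDerivAt g hg a
  rw [hA.fderiv]
  have hd1 : ContDiff ℝ 1 (fderiv ℝ g) := hg.fderiv_right (by norm_num)
  have hsymm : ∀ u v : F, fderiv ℝ (fderiv ℝ g) a u v = fderiv ℝ (fderiv ℝ g) a v u := by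
    intro u v
    exact second_derivative_symmetric
      (fun y => ((hg.differentiable (by norm_num)) y).hasFDerivAt)
      ((hd1.differentiable one_ne_zero a).hasFDerivAt) u v
  have e1 : ∀ w z : F,
      ⟪(((dualIso F : StrongDual ℝ F →L[ℝ] F)).comp (fderiv ℝ (fderiv ℝ g) a)) w, z⟫_ℝ
        = fderiv ℝ (fderiv ℝ g) a w z := by
    intro w z
    rw [ContinuousLinearMap.comp_apply]
    exact dualIso_inner _ _
  rw [e1, e1]
  exact hsymm u v

/-- Smoothness of the relativistic kinetic energy. -/
lemma K_contDiff (b k : ℝ) (hk : 0 < k) :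
    ContDiff ℝ 2 (fun p : F => b * Real.sqrt (‖p‖ ^ 2 + k)) := by
  rw [contDiff_iff_contDiffAt]
  intro p
  have hq : ContDiff ℝ 2 (fun p : F => ‖p‖ ^ 2 + k) :=
    (contDiff_norm_sq ℝ).add contDiff_const
  exact contDiffAt_const.mul (hq.contDiffAt.sqrt (by positivity))

/-- Gradient of the relativistic kinetic energy. -/
lemma K_gradient (b k : ℝ) (hk : 0 < k) (p : F) :
    gradient (fun p : F => b * Real.sqrt (‖p‖ ^ 2 + k)) p
      = (b / Real.sqrt (‖p‖ ^ 2 + k)) • p := by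
  have hpos : (0 : ℝ) < ‖p‖ ^ 2 + k := by positivity
  have hs : (0 : ℝ) < Real.sqrt (‖p‖ ^ 2 + k) := Real.sqrt_pos.mpr hpos
  have hinner : HasFDerivAt (fun q : F => ⟪q, q⟫_ℝ)
      ((fderivInnerCLM ℝ (p, p)).comp
        ((ContinuousLinearMap.id ℝ F).prod (ContinuousLinearMap.id ℝ F))) p :=
    (hasFDerivAt_id p).inner ℝ (hasFDerivAt_id p)
  have hne : ((fun q : F => ⟪q, q⟫_ℝ + k) p) ≠ 0 := by
    simp only [real_inner_self_eq_norm_sq]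
    positivity
  have h2 := ((hinner.add_const k).sqrt hne).const_mul b
  simp only [real_inner_self_eq_norm_sq] at h2
  have h4 := h2.hasGradientAt
  rw [h4.gradient]
  have key : (b • (1 / (2 * Real.sqrt (‖p‖ ^ 2 + k))) •
      (fderivInnerCLM ℝ (p, p)).comp
        ((ContinuousLinearMap.id ℝ F).prod (ContinuousLinearMap.id ℝ F)))
      = InnerProductSpace.toDual ℝ F ((b / Real.sqrt (‖p‖ ^ 2 + k)) • p) := by
    refine ContinuousLinearMap.ext fun v => ?_
    simp only [ContinuousLinearMap.smul_apply, ContinuousLinearMap.comp_apply,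
    ContinuousLinearMap.prod_apply, ContinuousLinearMap.id_apply, fderivInnerCLM_apply,
    InnerProductSpace.toDual_apply_apply, real_inner_smul_left, smul_eq_mul]
    have hcomm : ⟪v, p⟫_ℝ = ⟪p, v⟫_ℝ := real_inner_comm p v
    rw [hcomm]
    field_simp
    ring
  rw [key]
  exact (InnerProductSpace.toDual ℝ F).symm_apply_apply _

/-- The algebraic heart of the conformal-symplectic computation. -/
lemma conf_calc {E : Type*} [NormedAddCommGroup E] [InnerProductSpace ℝ E]
    (S H : E →L[ℝ] E)
    (hS : ∀ u v : E, ⟪S u, v⟫_ℝ = ⟪S v, u⟫_ℝ)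
    (hH : ∀ u v : E, ⟪H u, v⟫_ℝ = ⟪H v, u⟫_ℝ)
    (e h : ℝ) (ξ₁ ξ₂ η₁ η₂ : E) :
    ⟪ξ₁ + S (e • ξ₂ - h • H ξ₁), e • η₂ - h • H η₁⟫_ℝ
      - ⟪e • ξ₂ - h • H ξ₁, η₁ + S (e • η₂ - h • H η₁)⟫_ℝ
    = e * (⟪ξ₁, η₂⟫_ℝ - ⟪ξ₂, η₁⟫_ℝ) := by
  have h1 : ⟪e • ξ₂ - h • H ξ₁, S (e • η₂ - h • H η₁)⟫_ℝ
      = ⟪S (e • ξ₂ - h • H ξ₁), e • η₂ - h • H η₁⟫_ℝ := by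
    rw [real_inner_comm, hS]
  rw [inner_add_left, inner_add_right, h1]
  have h2 : ⟪ξ₁, H η₁⟫_ℝ = ⟪H ξ₁, η₁⟫_ℝ := by
    rw [real_inner_comm, hH]
  simp only [inner_sub_left, inner_sub_right, real_inner_smul_left, real_inner_smul_right]
  rw [h2]
  ring

end Aux

/-- the relativistic heavy-ball step
`P = e^{−γh} p − h ∇f(x)`, `X = x + h c P / √(‖P‖² + m²c²)` is conformal
symplectic with factor `e^{−γh}`. -/
theorem relativistic_heavyBall_conformal_symplectic
    {n : ℕ} (f : EuclideanSpace ℝ (Fin n) → ℝ) (hf : ContDiff ℝ 2 f)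
    (m γ c h : ℝ) (hm : 0 < m) (hγ : 0 ≤ γ) (hc : 0 < c) (hh : 0 < h)
    (Ψ : EuclideanSpace ℝ (Fin n) × EuclideanSpace ℝ (Fin n) →
         EuclideanSpace ℝ (Fin n) × EuclideanSpace ℝ (Fin n))
    (hΨ : ∀ x p, Ψ (x, p) =
      (x + (h * c / Real.sqrt (‖Real.exp (-γ * h) • p - h • gradient f x‖ ^ 2 + m ^ 2 * c ^ 2)) •
          (Real.exp (-γ * h) • p - h • gradient f x),
        Real.exp (-γ * h) • p - h • gradient f x)) :
    ∀ (z ξ η : EuclideanSpace ℝ (Fin n) × EuclideanSpace ℝ (Fin n)),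
      sympForm (fderiv ℝ Ψ z ξ) (fderiv ℝ Ψ z η)
        = Real.exp (-γ * h) * sympForm ξ η := by
  intro z ξ η
  obtain ⟨x₁, p₁⟩ := z
  set e := Real.exp (-γ * h) with he
  have hk : (0 : ℝ) < m ^ 2 * c ^ 2 := by positivity
  set K : EuclideanSpace ℝ (Fin n) → ℝ :=
    fun p => (h * c) * Real.sqrt (‖p‖ ^ 2 + m ^ 2 * c ^ 2) with hKdef
  have hKsm : ContDiff ℝ 2 K := K_contDiff (h * c) (m ^ 2 * c ^ 2) hk
  have hgradK : ∀ p : EuclideanSpace ℝ (Fin n), gradient K p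
      = (h * c / Real.sqrt (‖p‖ ^ 2 + m ^ 2 * c ^ 2)) • p :=
    fun p => K_gradient (h * c) (m ^ 2 * c ^ 2) hk p
  have hΨ' : Ψ = fun q : EuclideanSpace ℝ (Fin n) × EuclideanSpace ℝ (Fin n) =>
      (q.1 + gradient K (e • q.2 - h • gradient f q.1), e • q.2 - h • gradient f q.1) := by
    funext q
    obtain ⟨a, b⟩ := q
    rw [hΨ a b, hgradK]
  -- derivative pieces
  have hHf : HasFDerivAt (gradient f) (fderiv ℝ (gradient f) x₁) x₁ :=
    (grad_hasFDerivAt f hf x₁).differentiableAt.hasFDerivAt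
  set P : EuclideanSpace ℝ (Fin n) := e • p₁ - h • gradient f x₁ with hPdef
  have hHK : HasFDerivAt (gradient K) (fderiv ℝ (gradient K) P) P :=
    (grad_hasFDerivAt K hKsm P).differentiableAt.hasFDerivAt
  set H := fderiv ℝ (gradient f) x₁ with hHdef
  set S := fderiv ℝ (gradient K) P with hSdef
  set A : EuclideanSpace ℝ (Fin n) × EuclideanSpace ℝ (Fin n) →L[ℝ] EuclideanSpace ℝ (Fin n) :=
    e • ContinuousLinearMap.snd ℝ _ _ - h • (H.comp (ContinuousLinearMap.fst ℝ _ _)) with hAdef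
  have hT : HasFDerivAt
      (fun q : EuclideanSpace ℝ (Fin n) × EuclideanSpace ℝ (Fin n) =>
        e • q.2 - h • gradient f q.1) A (x₁, p₁) := by
    have h2 : HasFDerivAt
        (fun q : EuclideanSpace ℝ (Fin n) × EuclideanSpace ℝ (Fin n) => gradient f q.1)
        (H.comp (ContinuousLinearMap.fst ℝ _ _)) (x₁, p₁) :=
      hHf.comp (g := gradient f) (f := Prod.fst) _ hasFDerivAt_fst
    exact ((hasFDerivAt_snd).const_smul e).sub (h2.const_smul h)
  have h3 : HasFDerivAt
      (fun q : EuclideanSpace ℝ (Fin n) × EuclideanSpace ℝ (Fin n) =>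
        gradient K (e • q.2 - h • gradient f q.1))
      (S.comp A) (x₁, p₁) := HasFDerivAt.comp (g := gradient K) (x₁, p₁) hHK hT
  have hD : HasFDerivAt Ψ
      (((ContinuousLinearMap.fst ℝ _ _) + S.comp A).prod A) (x₁, p₁) := by
    rw [hΨ']
    exact (hasFDerivAt_fst.add h3).prodMk hT
  rw [hD.fderiv]
  have hSsymm : ∀ u v : EuclideanSpace ℝ (Fin n), ⟪S u, v⟫_ℝ = ⟪S v, u⟫_ℝ :=
    fun u v => grad_fderiv_symm K hKsm P u v
  have hHsymm : ∀ u v : EuclideanSpace ℝ (Fin n), ⟪H u, v⟫_ℝ = ⟪H v, u⟫_ℝ :=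
    fun u v => grad_fderiv_symm f hf x₁ u v
  have hcalc := conf_calc S H hSsymm hHsymm e h ξ.1 ξ.2 η.1 η.2
  simpa only [sympForm, ContinuousLinearMap.prod_apply, ContinuousLinearMap.add_apply,
    ContinuousLinearMap.comp_apply, ContinuousLinearMap.sub_apply,
    ContinuousLinearMap.smul_apply, ContinuousLinearMap.coe_fst',
    ContinuousLinearMap.coe_snd', hAdef] using hcalc
end

section
/- Let f : ℝⁿ → ℝ be twice continuously differentiable, m > 0, γ ≥ 0, h > 0. Define the dissipative leapfrog step Ψ : ℝⁿ × ℝⁿ → ℝⁿ × ℝⁿ by Ψ(x, p) = (X, P) where x̃ = x + (h/(2m)) e^{−γh/2} p, p̃ = e^{−γh/2} p − h ∇f(x̃), X = x̃ + (h/(2m)) p̃, and P = e^{−γh/2} p̃. Then Ψ is conformal symplectic with factor e^{−γh}: for every (x, p) and all ξ, η ∈ ℝⁿ × ℝⁿ, ω(DΨ(x,p) ξ, DΨ(x,p) η) = e^{−γh} ω(ξ, η). -/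
open InnerProductSpace


open scoped InnerProductSpace

/-- One step of the dissipative leapfrog integrator for `H(x,p) = ‖p‖²/(2m) + f(x)`
with damping `γ`:
`x̃ = x + (h/(2m)) e^{−γh/2} p`, `p̃ = e^{−γh/2} p − h ∇f(x̃)`,
`X = x̃ + (h/(2m)) p̃`, `P = e^{−γh/2} p̃`. -/
noncomputable def leapfrogStep {n : ℕ} (f : EuclideanSpace ℝ (Fin n) → ℝ) (m γ h : ℝ)
    (z : EuclideanSpace ℝ (Fin n) × EuclideanSpace ℝ (Fin n)) :
    EuclideanSpace ℝ (Fin n) × EuclideanSpace ℝ (Fin n) :=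
  let xt := z.1 + (h / (2 * m)) • (Real.exp (-γ * h / 2) • z.2)
  let pt := Real.exp (-γ * h / 2) • z.2 - h • gradient f xt
  (xt + (h / (2 * m)) • pt, Real.exp (-γ * h / 2) • pt)

section Aux

variable {E : Type*} [NormedAddCommGroup E] [InnerProductSpace ℝ E]

noncomputable def dualEquivAux (E : Type*) [NormedAddCommGroup E] [InnerProductSpace ℝ E]
    [CompleteSpace E] : StrongDual ℝ E ≃ₗᵢ[ℝ] E := (toDual ℝ E).symm

lemma grad_hasFDerivAt_s4 [CompleteSpace E] {f : E → ℝ} (hf : ContDiff ℝ 2 f) (x : E) :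
    HasFDerivAt (gradient f)
      (((dualEquivAux E).toContinuousLinearEquiv.toContinuousLinearMap).comp
        (fderiv ℝ (fderiv ℝ f) x)) x := by
  have h1 : ContDiff ℝ 1 (fderiv ℝ f) := hf.fderiv_right (by norm_num)
  have h2 : HasFDerivAt (fderiv ℝ f) (fderiv ℝ (fderiv ℝ f) x) x :=
    ((h1.differentiable one_ne_zero) x).hasFDerivAt
  exact ((dualEquivAux E).toContinuousLinearEquiv.toContinuousLinearMap).hasFDerivAt.comp x h2

lemma grad_symm [CompleteSpace E] {f : E → ℝ} (hf : ContDiff ℝ 2 f) (x : E) (u v : E) :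
    ⟪fderiv ℝ (gradient f) x u, v⟫_ℝ = ⟪fderiv ℝ (gradient f) x v, u⟫_ℝ := by
  have hsym := hf.contDiffAt.isSymmSndFDerivAt (x := x) (by simp)
  rw [(grad_hasFDerivAt_s4 hf x).fderiv]
  simp only [ContinuousLinearMap.coe_comp', Function.comp_apply]
  have key : ∀ w y : E,
      ⟪(dualEquivAux E).toContinuousLinearEquiv.toContinuousLinearMap
        (fderiv ℝ (fderiv ℝ f) x w), y⟫_ℝ = fderiv ℝ (fderiv ℝ f) x w y := by
    intro w y
    exact toDual_symm_apply
  rw [key, key, hsym u v]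

lemma symp_algebra (A : E →L[ℝ] E) (hA : ∀ u v : E, ⟪A u, v⟫_ℝ = ⟪A v, u⟫_ℝ)
    (a c h : ℝ) (x1 x2 y1 y2 : E) :
    ⟪(x1 + a • (c • x2)) + a • (c • x2 - h • A (x1 + a • (c • x2))),
      c • (c • y2 - h • A (y1 + a • (c • y2)))⟫_ℝ
    - ⟪c • (c • x2 - h • A (x1 + a • (c • x2))),
      (y1 + a • (c • y2)) + a • (c • y2 - h • A (y1 + a • (c • y2)))⟫_ℝ
    = (c * c) * (⟪x1, y2⟫_ℝ - ⟪x2, y1⟫_ℝ) := by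
  have f11 : ⟪x1, A y1⟫_ℝ = ⟪A x1, y1⟫_ℝ := by rw [real_inner_comm]; exact hA y1 x1
  have f12 : ⟪x1, A y2⟫_ℝ = ⟪A x1, y2⟫_ℝ := by rw [real_inner_comm]; exact hA y2 x1
  have f21 : ⟪x2, A y1⟫_ℝ = ⟪A x2, y1⟫_ℝ := by rw [real_inner_comm]; exact hA y1 x2
  have f22 : ⟪x2, A y2⟫_ℝ = ⟪A x2, y2⟫_ℝ := by rw [real_inner_comm]; exact hA y2 x2
  have c12 : ⟪x1, y2⟫_ℝ = ⟪y2, x1⟫_ℝ := real_inner_comm _ _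
  have c21 : ⟪x2, y1⟫_ℝ = ⟪y1, x2⟫_ℝ := real_inner_comm _ _
  have c22 : ⟪x2, y2⟫_ℝ = ⟪y2, x2⟫_ℝ := real_inner_comm _ _
  simp only [map_add, map_smul, inner_add_left, inner_add_right, inner_sub_left,
    inner_sub_right, real_inner_smul_left, real_inner_smul_right]
  linear_combination (-(c*h)) * f11 + (-(c*h*a*c)) * f12 + (-(c*h*a*c)) * f21
    + (-(c*h*a*c*a*c)) * f22 + 0 * c12 + 0 * c21 + 0 * c22

end Aux

/-- the dissipative leapfrog step is conformal symplectic with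
factor `e^{−γh}`. -/
theorem leapfrog_conformal_symplectic
    {n : ℕ} (f : EuclideanSpace ℝ (Fin n) → ℝ) (hf : ContDiff ℝ 2 f)
    (m γ h : ℝ) (hm : 0 < m) (hγ : 0 ≤ γ) (hh : 0 < h) :
    ∀ (z ξ η : EuclideanSpace ℝ (Fin n) × EuclideanSpace ℝ (Fin n)),
      sympForm (fderiv ℝ (leapfrogStep f m γ h) z ξ) (fderiv ℝ (leapfrogStep f m γ h) z η)
        = Real.exp (-γ * h) * sympForm ξ η := by
  intro z ξ η
  set c : ℝ := Real.exp (-γ * h / 2) with hc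
  set a : ℝ := h / (2 * m) with ha
  set A : EuclideanSpace ℝ (Fin n) →L[ℝ] EuclideanSpace ℝ (Fin n) := fderiv ℝ (gradient f) (z.1 + a • (c • z.2)) with hAdef
  have hgrad : HasFDerivAt (gradient f) A (z.1 + a • (c • z.2)) := by
    rw [hAdef, (grad_hasFDerivAt_s4 hf _).fderiv]
    exact grad_hasFDerivAt_s4 hf _
  have hA : ∀ u v : EuclideanSpace ℝ (Fin n), ⟪A u, v⟫_ℝ = ⟪A v, u⟫_ℝ := grad_symm hf _
  -- the linear maps
  set L1 : EuclideanSpace ℝ (Fin n) × EuclideanSpace ℝ (Fin n) →L[ℝ] EuclideanSpace ℝ (Fin n) :=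
    ContinuousLinearMap.fst ℝ _ _ + a • (c • ContinuousLinearMap.snd ℝ _ _) with hL1
  have hxt : HasFDerivAt (fun w : EuclideanSpace ℝ (Fin n) × EuclideanSpace ℝ (Fin n) => w.1 + a • (c • w.2)) L1 z :=
    (hasFDerivAt_fst.add ((hasFDerivAt_snd.const_smul c).const_smul a))
  have hcomp : HasFDerivAt (fun w : EuclideanSpace ℝ (Fin n) × EuclideanSpace ℝ (Fin n) => gradient f (w.1 + a • (c • w.2)))
      (A.comp L1) z := by have := hgrad.comp z hxt; exact this
  set L2 : EuclideanSpace ℝ (Fin n) × EuclideanSpace ℝ (Fin n) →L[ℝ] EuclideanSpace ℝ (Fin n) :=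
    c • ContinuousLinearMap.snd ℝ _ _ - h • A.comp L1 with hL2
  have hpt : HasFDerivAt
      (fun w : EuclideanSpace ℝ (Fin n) × EuclideanSpace ℝ (Fin n) => c • w.2 - h • gradient f (w.1 + a • (c • w.2))) L2 z :=
    (hasFDerivAt_snd.const_smul c).sub (hcomp.const_smul h)
  have hΨ : HasFDerivAt (leapfrogStep f m γ h) ((L1 + a • L2).prod (c • L2)) z :=
    HasFDerivAt.prodMk (hxt.add (hpt.const_smul a)) (hpt.const_smul c)
  rw [hΨ.fderiv]
  have hexp : Real.exp (-γ * h) = c * c := by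
    rw [hc, ← Real.exp_add]; ring_nf
  rw [hexp]
  simp only [sympForm, ContinuousLinearMap.prod_apply, ContinuousLinearMap.add_apply,
    ContinuousLinearMap.coe_smul', Pi.smul_apply, ContinuousLinearMap.sub_apply,
    ContinuousLinearMap.coe_comp', Function.comp_apply, ContinuousLinearMap.coe_fst',
    ContinuousLinearMap.coe_snd', hL1, hL2]
  exact symp_algebra A hA a c h ξ.1 ξ.2 η.1 η.2
end

section
/- Let f : ℝⁿ → ℝ be twice continuously differentiable, m > 0, γ ≥ 0, T > 0, and let (x, p) : [0, T] → ℝⁿ × ℝⁿ be a solution of ẋ = p/m, ṗ = −∇f(x) − γ p. For h > 0 define one classical-momentum step from the initial condition: P_h = e^{−γh} p(0) − h ∇f(x(0)), X_h = x(0) + (h/m) P_h. Then the heavy-ball method has local error of order h² (i.e., it is an integrator of order 1): there exist constants C > 0 and ε ∈ (0, T] such that for all h ∈ (0, ε], ‖X_h − x(h)‖ + ‖P_h − p(h)‖ ≤ C h². -/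
set_option maxHeartbeats 1000000

/-- Quadratic bound for the exponential: `|exp (-a) - 1 + a| ≤ a ^ 2` for `a ≥ 0`. -/
lemma exp_neg_quad_bound (a : ℝ) (ha : 0 ≤ a) : |Real.exp (-a) - 1 + a| ≤ a ^ 2 := by
  have key : ∀ s ∈ Set.Icc (0:ℝ) a,
      HasDerivWithinAt (fun s : ℝ => Real.exp (-s) - 1 + s)
        (1 - Real.exp (-s)) (Set.Icc 0 a) s := by
    intro s _
    have h1 : HasDerivAt (fun s : ℝ => Real.exp (-s)) (-Real.exp (-s)) s := by
      simpa [Function.comp_def] using (Real.hasDerivAt_exp (-s)).comp s (hasDerivAt_neg s)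
    have : HasDerivWithinAt (fun s : ℝ => Real.exp (-s) - 1 + s) (-Real.exp (-s) + 1) (Set.Icc 0 a) s :=
      ((h1.sub_const 1).add (hasDerivAt_id s)).hasDerivWithinAt (s := Set.Icc 0 a)
    convert this using 1
    ring
  have bound : ∀ s ∈ Set.Icc (0:ℝ) a, ‖1 - Real.exp (-s)‖ ≤ a := by
    intro s hs
    have he1 : Real.exp (-s) ≤ 1 := Real.exp_le_one_iff.2 (by linarith [hs.1])
    have he2 : -s + 1 ≤ Real.exp (-s) := Real.add_one_le_exp (-s)
    rw [Real.norm_eq_abs, abs_sub_le_iff]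
    constructor
    · linarith [hs.2]
    · linarith [hs.1]
  have := (convex_Icc (0:ℝ) a).norm_image_sub_le_of_norm_hasDerivWithin_le key bound
      (Set.left_mem_Icc.2 ha) (Set.right_mem_Icc.2 ha)
  simp only [Real.norm_eq_abs, neg_zero, Real.exp_zero, sub_zero] at this
  calc |Real.exp (-a) - 1 + a| = |(Real.exp (-a) - 1 + a) - (1 - 1 + 0)| := by norm_num
    _ ≤ a * |a| := this
    _ = a ^ 2 := by rw [abs_of_nonneg ha]; ring

/-- Linear bound: `1 - exp (-a) ≤ a` for all `a`. -/
lemma one_sub_exp_neg_le (a : ℝ) : 1 - Real.exp (-a) ≤ a := by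
  have := Real.add_one_le_exp (-a); linarith

/-- the heavy-ball (classical momentum) method has local error
of order `h²` (it is an integrator of order 1) for the conformal Hamiltonian
system `ẋ = p/m`, `ṗ = −∇f(x) − γp`. -/
theorem heavyBall_local_error_order_one
    {n : ℕ} (f : EuclideanSpace ℝ (Fin n) → ℝ) (hf : ContDiff ℝ 2 f)
    (m γ T : ℝ) (hm : 0 < m) (hγ : 0 ≤ γ) (hT : 0 < T)
    (x p : ℝ → EuclideanSpace ℝ (Fin n))
    (hx : ∀ t ∈ Set.Icc (0 : ℝ) T,
      HasDerivWithinAt x ((1 / m) • p t) (Set.Icc 0 T) t)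
    (hp : ∀ t ∈ Set.Icc (0 : ℝ) T,
      HasDerivWithinAt p (-(gradient f (x t)) - γ • p t) (Set.Icc 0 T) t) :
    ∃ C > 0, ∃ ε ∈ Set.Ioc (0 : ℝ) T, ∀ h ∈ Set.Ioc (0 : ℝ) ε,
      ‖(x 0 + (h / m) • (Real.exp (-γ * h) • p 0 - h • gradient f (x 0))) - x h‖
        + ‖(Real.exp (-γ * h) • p 0 - h • gradient f (x 0)) - p h‖ ≤ C * h ^ 2 := by
  have h0I : (0:ℝ) ∈ Set.Icc (0:ℝ) T := Set.left_mem_Icc.2 hT.le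
  -- gradient is C¹
  have hg1 : ContDiff ℝ 1 (gradient f) := by
    have h1 : ContDiff ℝ 1 (fderiv ℝ f) := hf.fderiv_right (by norm_num)
    exact ((InnerProductSpace.toDual ℝ (EuclideanSpace ℝ (Fin n))).symm.contDiff).comp h1
  -- continuity of x, p
  have cx : ContinuousOn x (Set.Icc 0 T) := fun t ht => (hx t ht).continuousWithinAt
  have cp : ContinuousOn p (Set.Icc 0 T) := fun t ht => (hp t ht).continuousWithinAt
  -- bound on ‖p‖
  obtain ⟨Mp, hMp⟩ := isCompact_Icc.exists_bound_of_continuousOn cp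
  have hMp0 : 0 ≤ Mp := le_trans (norm_nonneg _) (hMp 0 h0I)
  -- bound on ‖gradient f ∘ x‖
  obtain ⟨Mg, hMg'⟩ := isCompact_Icc.exists_bound_of_continuousOn
    (hg1.continuous.comp_continuousOn cx)
  have hMg : ∀ t ∈ Set.Icc (0:ℝ) T, ‖gradient f (x t)‖ ≤ Mg := fun t ht => hMg' t ht
  have hMg0 : 0 ≤ Mg := le_trans (norm_nonneg _) (hMg 0 h0I)
  -- trajectory stays in a closed ball
  obtain ⟨R, hR⟩ := isCompact_Icc.exists_bound_of_continuousOn cx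
  have hxS : ∀ t ∈ Set.Icc (0:ℝ) T, x t ∈ Metric.closedBall (0 : EuclideanSpace ℝ (Fin n)) R := by
    intro t ht
    simpa [Metric.mem_closedBall, dist_eq_norm] using hR t ht
  -- Lipschitz bound for the gradient on the ball
  obtain ⟨Lg, hLg⟩ := (isCompact_closedBall (0 : EuclideanSpace ℝ (Fin n)) R)
    |>.exists_bound_of_continuousOn ((hg1.continuous_fderiv one_ne_zero).continuousOn)
  have hLg0 : 0 ≤ Lg := le_trans (norm_nonneg _) (hLg (x 0) (hxS 0 h0I))
  have hgLip : ∀ t ∈ Set.Icc (0:ℝ) T,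
      ‖gradient f (x t) - gradient f (x 0)‖ ≤ Lg * ‖x t - x 0‖ := fun t ht =>
    (convex_closedBall 0 R).norm_image_sub_le_of_norm_fderiv_le
      (fun y _ => (hg1.differentiable one_ne_zero).differentiableAt) hLg (hxS 0 h0I) (hxS t ht)
  -- bound on the derivative of p
  have hpd_bound : ∀ t ∈ Set.Icc (0:ℝ) T,
      ‖-(gradient f (x t)) - γ • p t‖ ≤ Mg + γ * Mp := by
    intro t ht
    calc ‖-(gradient f (x t)) - γ • p t‖
        ≤ ‖-(gradient f (x t))‖ + ‖γ • p t‖ := norm_sub_le _ _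
      _ = ‖gradient f (x t)‖ + γ * ‖p t‖ := by
          rw [norm_neg, norm_smul, Real.norm_eq_abs, abs_of_nonneg hγ]
      _ ≤ Mg + γ * Mp := add_le_add (hMg t ht)
          (mul_le_mul_of_nonneg_left (hMp t ht) hγ)
  have hMp'0 : 0 ≤ Mg + γ * Mp := by positivity
  -- increments of p and x
  have hpstep : ∀ t ∈ Set.Icc (0:ℝ) T, ‖p t - p 0‖ ≤ (Mg + γ * Mp) * t := by
    intro t ht
    have := (convex_Icc (0:ℝ) T).norm_image_sub_le_of_norm_hasDerivWithin_le
      hp hpd_bound h0I ht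
    simpa [Real.norm_eq_abs, abs_of_nonneg ht.1] using this
  have hxstep : ∀ t ∈ Set.Icc (0:ℝ) T, ‖x t - x 0‖ ≤ (Mp / m) * t := by
    intro t ht
    have bound : ∀ s ∈ Set.Icc (0:ℝ) T, ‖(1 / m) • p s‖ ≤ Mp / m := by
      intro s hs
      rw [norm_smul, Real.norm_eq_abs, abs_of_nonneg (by positivity : (0:ℝ) ≤ 1/m)]
      calc (1 / m) * ‖p s‖ ≤ (1 / m) * Mp :=
            mul_le_mul_of_nonneg_left (hMp s hs) (by positivity)
        _ = Mp / m := by ring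
    have := (convex_Icc (0:ℝ) T).norm_image_sub_le_of_norm_hasDerivWithin_le
      hx bound h0I ht
    simpa [Real.norm_eq_abs, abs_of_nonneg ht.1] using this
  -- Lipschitz-type bound for the derivative of p along the trajectory
  have hL0 : 0 ≤ Lg * (Mp / m) + γ * (Mg + γ * Mp) := by positivity
  have hpdLip : ∀ t ∈ Set.Icc (0:ℝ) T,
      ‖(-(gradient f (x t)) - γ • p t) - (-(gradient f (x 0)) - γ • p 0)‖
        ≤ (Lg * (Mp / m) + γ * (Mg + γ * Mp)) * t := by
    intro t ht
    have e1 : (-(gradient f (x t)) - γ • p t) - (-(gradient f (x 0)) - γ • p 0)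
        = -(gradient f (x t) - gradient f (x 0)) - γ • (p t - p 0) := by
      rw [smul_sub]; abel
    rw [e1]
    calc ‖-(gradient f (x t) - gradient f (x 0)) - γ • (p t - p 0)‖
        ≤ ‖-(gradient f (x t) - gradient f (x 0))‖ + ‖γ • (p t - p 0)‖ := norm_sub_le _ _
      _ = ‖gradient f (x t) - gradient f (x 0)‖ + γ * ‖p t - p 0‖ := by
          rw [norm_neg, norm_smul, Real.norm_eq_abs, abs_of_nonneg hγ]
      _ ≤ Lg * ((Mp / m) * t) + γ * ((Mg + γ * Mp) * t) := by
          refine add_le_add (le_trans (hgLip t ht) ?_)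
            (mul_le_mul_of_nonneg_left (hpstep t ht) hγ)
          exact mul_le_mul_of_nonneg_left (hxstep t ht) hLg0
      _ = (Lg * (Mp / m) + γ * (Mg + γ * Mp)) * t := by ring
  -- the constant
  refine ⟨(Mg + γ * Mp) / m + (γ * ‖p 0‖ + ‖gradient f (x 0)‖) / m
      + (Lg * (Mp / m) + γ * (Mg + γ * Mp)) + γ ^ 2 * ‖p 0‖ + 1, by positivity,
    T, ⟨hT, le_rfl⟩, ?_⟩
  intro h hh
  obtain ⟨hh0, hhT⟩ := hh
  have hsubI : Set.Icc (0:ℝ) h ⊆ Set.Icc (0:ℝ) T := Set.Icc_subset_Icc le_rfl hhT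
  -- second-order Taylor bound for p
  have taylor_p : ‖p h - p 0 - h • (-(gradient f (x 0)) - γ • p 0)‖
      ≤ (Lg * (Mp / m) + γ * (Mg + γ * Mp)) * h * h := by
    have key : ∀ t ∈ Set.Icc (0:ℝ) h,
        HasDerivWithinAt (fun t => p t - t • (-(gradient f (x 0)) - γ • p 0))
          ((-(gradient f (x t)) - γ • p t) - (-(gradient f (x 0)) - γ • p 0))
          (Set.Icc 0 h) t := by
      intro t ht
      have h1 := (hp t (hsubI ht)).mono hsubI
      have h2 : HasDerivWithinAt (fun t : ℝ => t • (-(gradient f (x 0)) - γ • p 0))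
          (-(gradient f (x 0)) - γ • p 0) (Set.Icc 0 h) t := by
        simpa using (hasDerivWithinAt_id t (Set.Icc 0 h)).smul_const
          (-(gradient f (x 0)) - γ • p 0)
      exact h1.sub h2
    have bound : ∀ t ∈ Set.Icc (0:ℝ) h,
        ‖(-(gradient f (x t)) - γ • p t) - (-(gradient f (x 0)) - γ • p 0)‖
          ≤ (Lg * (Mp / m) + γ * (Mg + γ * Mp)) * h :=
      fun t ht => le_trans (hpdLip t (hsubI ht)) (mul_le_mul_of_nonneg_left ht.2 hL0)
    have := (convex_Icc (0:ℝ) h).norm_image_sub_le_of_norm_hasDerivWithin_le key bound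
      (Set.left_mem_Icc.2 hh0.le) (Set.right_mem_Icc.2 hh0.le)
    simp only [zero_smul, sub_zero, Real.norm_eq_abs, abs_of_nonneg hh0.le] at this
    rw [sub_right_comm] at this
    exact this
  -- second-order Taylor bound for x
  have taylor_x : ‖x h - x 0 - h • ((1 / m) • p 0)‖ ≤ ((Mg + γ * Mp) / m) * h * h := by
    have key : ∀ t ∈ Set.Icc (0:ℝ) h,
        HasDerivWithinAt (fun t => x t - t • ((1 / m) • p 0))
          ((1 / m) • p t - (1 / m) • p 0) (Set.Icc 0 h) t := by
      intro t ht
      have h1 := (hx t (hsubI ht)).mono hsubI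
      have h2 : HasDerivWithinAt (fun t : ℝ => t • ((1 / m) • p 0)) ((1 / m) • p 0)
          (Set.Icc 0 h) t := by
        simpa using (hasDerivWithinAt_id t (Set.Icc 0 h)).smul_const ((1 / m) • p 0)
      exact h1.sub h2
    have bound : ∀ t ∈ Set.Icc (0:ℝ) h,
        ‖(1 / m) • p t - (1 / m) • p 0‖ ≤ ((Mg + γ * Mp) / m) * h := by
      intro t ht
      rw [← smul_sub, norm_smul, Real.norm_eq_abs,
        abs_of_nonneg (by positivity : (0:ℝ) ≤ 1/m)]
      have h3 : ‖p t - p 0‖ ≤ (Mg + γ * Mp) * h :=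
        le_trans (hpstep t (hsubI ht)) (mul_le_mul_of_nonneg_left ht.2 hMp'0)
      calc (1 / m) * ‖p t - p 0‖ ≤ (1 / m) * ((Mg + γ * Mp) * h) :=
            mul_le_mul_of_nonneg_left h3 (by positivity)
        _ = ((Mg + γ * Mp) / m) * h := by ring
    have := (convex_Icc (0:ℝ) h).norm_image_sub_le_of_norm_hasDerivWithin_le key bound
      (Set.left_mem_Icc.2 hh0.le) (Set.right_mem_Icc.2 hh0.le)
    simp only [zero_smul, sub_zero, Real.norm_eq_abs, abs_of_nonneg hh0.le] at this
    rw [sub_right_comm] at this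
    exact this
  -- momentum-step deviation bounds
  have ha0 : 0 ≤ γ * h := by positivity
  have hPh1 : ‖(Real.exp (-(γ * h)) • p 0 - h • gradient f (x 0)) - p 0‖
      ≤ h * (γ * ‖p 0‖ + ‖gradient f (x 0)‖) := by
    have e1 : (Real.exp (-(γ * h)) • p 0 - h • gradient f (x 0)) - p 0
        = (Real.exp (-(γ * h)) - 1) • p 0 - h • gradient f (x 0) := by
      rw [sub_smul, one_smul]; abel
    rw [e1]
    have h1 : |Real.exp (-(γ * h)) - 1| ≤ γ * h := by
      rw [abs_sub_comm, abs_of_nonneg (by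
        have := Real.exp_le_one_iff.2 (neg_nonpos.2 ha0); linarith)]
      exact one_sub_exp_neg_le (γ * h)
    calc ‖(Real.exp (-(γ * h)) - 1) • p 0 - h • gradient f (x 0)‖
        ≤ ‖(Real.exp (-(γ * h)) - 1) • p 0‖ + ‖h • gradient f (x 0)‖ := norm_sub_le _ _
      _ = |Real.exp (-(γ * h)) - 1| * ‖p 0‖ + |h| * ‖gradient f (x 0)‖ := by
          rw [norm_smul, norm_smul, Real.norm_eq_abs, Real.norm_eq_abs]
      _ ≤ (γ * h) * ‖p 0‖ + h * ‖gradient f (x 0)‖ := by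
          rw [abs_of_nonneg hh0.le]
          exact add_le_add (mul_le_mul_of_nonneg_right h1 (norm_nonneg _)) le_rfl
      _ = h * (γ * ‖p 0‖ + ‖gradient f (x 0)‖) := by ring
  have hPh2 : ‖(Real.exp (-(γ * h)) • p 0 - h • gradient f (x 0))
        - (p 0 + h • (-(gradient f (x 0)) - γ • p 0))‖ ≤ γ ^ 2 * ‖p 0‖ * h ^ 2 := by
    have e1 : (Real.exp (-(γ * h)) • p 0 - h • gradient f (x 0))
        - (p 0 + h • (-(gradient f (x 0)) - γ • p 0))
        = (Real.exp (-(γ * h)) - 1 + γ * h) • p 0 := by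
      module
    rw [e1, norm_smul, Real.norm_eq_abs]
    calc |Real.exp (-(γ * h)) - 1 + γ * h| * ‖p 0‖ ≤ (γ * h) ^ 2 * ‖p 0‖ :=
          mul_le_mul_of_nonneg_right (exp_neg_quad_bound (γ * h) ha0) (norm_nonneg _)
      _ = γ ^ 2 * ‖p 0‖ * h ^ 2 := by ring
  -- assemble
  have hexp : -γ * h = -(γ * h) := by ring
  have hX : ‖(x 0 + (h / m) • (Real.exp (-γ * h) • p 0 - h • gradient f (x 0))) - x h‖
      ≤ ((Mg + γ * Mp) / m) * h ^ 2
        + ((γ * ‖p 0‖ + ‖gradient f (x 0)‖) / m) * h ^ 2 := by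
    rw [hexp]
    have e1 : (x 0 + (h / m) • (Real.exp (-(γ * h)) • p 0 - h • gradient f (x 0))) - x h
        = -(x h - x 0 - h • ((1 / m) • p 0))
          + (h / m) • ((Real.exp (-(γ * h)) • p 0 - h • gradient f (x 0)) - p 0) := by
      module
    rw [e1]
    calc ‖-(x h - x 0 - h • ((1 / m) • p 0))
          + (h / m) • ((Real.exp (-(γ * h)) • p 0 - h • gradient f (x 0)) - p 0)‖
        ≤ ‖x h - x 0 - h • ((1 / m) • p 0)‖
          + |h / m| * ‖(Real.exp (-(γ * h)) • p 0 - h • gradient f (x 0)) - p 0‖ := by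
          refine le_trans (norm_add_le _ _) ?_
          rw [norm_neg, norm_smul, Real.norm_eq_abs]
      _ ≤ ((Mg + γ * Mp) / m) * h * h
          + (h / m) * (h * (γ * ‖p 0‖ + ‖gradient f (x 0)‖)) := by
          refine add_le_add taylor_x ?_
          rw [abs_of_nonneg (by positivity : (0:ℝ) ≤ h / m)]
          exact mul_le_mul_of_nonneg_left hPh1 (by positivity)
      _ = ((Mg + γ * Mp) / m) * h ^ 2
          + ((γ * ‖p 0‖ + ‖gradient f (x 0)‖) / m) * h ^ 2 := by ring
  have hP : ‖(Real.exp (-γ * h) • p 0 - h • gradient f (x 0)) - p h‖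
      ≤ (Lg * (Mp / m) + γ * (Mg + γ * Mp)) * h ^ 2 + γ ^ 2 * ‖p 0‖ * h ^ 2 := by
    rw [hexp]
    have e1 : (Real.exp (-(γ * h)) • p 0 - h • gradient f (x 0)) - p h
        = -(p h - p 0 - h • (-(gradient f (x 0)) - γ • p 0))
          + ((Real.exp (-(γ * h)) • p 0 - h • gradient f (x 0))
            - (p 0 + h • (-(gradient f (x 0)) - γ • p 0))) := by
      module
    rw [e1]
    calc ‖-(p h - p 0 - h • (-(gradient f (x 0)) - γ • p 0))
          + ((Real.exp (-(γ * h)) • p 0 - h • gradient f (x 0))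
            - (p 0 + h • (-(gradient f (x 0)) - γ • p 0)))‖
        ≤ ‖p h - p 0 - h • (-(gradient f (x 0)) - γ • p 0)‖
          + ‖(Real.exp (-(γ * h)) • p 0 - h • gradient f (x 0))
            - (p 0 + h • (-(gradient f (x 0)) - γ • p 0))‖ := by
          refine le_trans (norm_add_le _ _) ?_
          rw [norm_neg]
      _ ≤ (Lg * (Mp / m) + γ * (Mg + γ * Mp)) * h * h + γ ^ 2 * ‖p 0‖ * h ^ 2 :=
          add_le_add taylor_p hPh2
      _ = (Lg * (Mp / m) + γ * (Mg + γ * Mp)) * h ^ 2 + γ ^ 2 * ‖p 0‖ * h ^ 2 := by ring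
  calc ‖(x 0 + (h / m) • (Real.exp (-γ * h) • p 0 - h • gradient f (x 0))) - x h‖
      + ‖(Real.exp (-γ * h) • p 0 - h • gradient f (x 0)) - p h‖
      ≤ (((Mg + γ * Mp) / m) * h ^ 2
          + ((γ * ‖p 0‖ + ‖gradient f (x 0)‖) / m) * h ^ 2)
        + ((Lg * (Mp / m) + γ * (Mg + γ * Mp)) * h ^ 2 + γ ^ 2 * ‖p 0‖ * h ^ 2) :=
        add_le_add hX hP
    _ ≤ _ := by nlinarith [sq_nonneg h]
end

section
/- Let f : ℝⁿ → ℝ be three times continuously differentiable, m > 0, γ ≥ 0, T > 0, and let (x, p) : [0, T] → ℝⁿ × ℝⁿ be a solution of ẋ = p/m, ṗ = −∇f(x) − γ p. For h > 0 define one dissipative leapfrog step from the initial condition: x̃_h = x(0) + (h/(2m)) e^{−γh/2} p(0), p̃_h = e^{−γh/2} p(0) − h ∇f(x̃_h), X_h = x̃_h + (h/(2m)) p̃_h, P_h = e^{−γh/2} p̃_h. Then the dissipative leapfrog method has local error of order h³ (i.e., it is an integrator of order 2): there exist constants C > 0 and ε ∈ (0, T] such that for all h ∈ (0, ε], ‖X_h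 − x(h)‖ + ‖P_h − p(h)‖ ≤ C h³. -/
open Set

lemma expb1 (u : ℝ) (h0 : 0 ≤ u) (h1 : u ≤ 1) : |Real.exp (-u) - 1| ≤ 2 * u := by
  have habs : |(-u : ℝ)| ≤ 1 := by rw [abs_le]; constructor <;> nlinarith
  have := Real.exp_bound habs (n := 1) one_pos
  simp only [Finset.sum_range_one, pow_zero, Nat.factorial_zero, Nat.cast_one] at this
  have h2 : |Real.exp (-u) - 1| ≤ |(-u : ℝ)| ^ 1 * (2 / (1 * 1)) := by
    convert this using 3 <;> norm_num
  rw [abs_neg, abs_of_nonneg h0] at h2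
  nlinarith [h2]

lemma expb2 (u : ℝ) (h0 : 0 ≤ u) (h1 : u ≤ 1) : |Real.exp (-u) - 1 + u| ≤ u ^ 2 := by
  have habs : |(-u : ℝ)| ≤ 1 := by rw [abs_le]; constructor <;> nlinarith
  have := Real.exp_bound habs (n := 2) (by norm_num)
  simp only [Finset.sum_range_succ, Finset.sum_range_one, pow_zero, pow_one,
    Nat.factorial_zero, Nat.factorial_one, Nat.cast_one] at this
  have h2 : |Real.exp (-u) - (1 + -u)| ≤ |(-u : ℝ)| ^ 2 * (3 / (2 * 2)) := by
    convert this using 3 <;> norm_num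
  rw [abs_neg, abs_of_nonneg h0] at h2
  have h3 : Real.exp (-u) - (1 + -u) = Real.exp (-u) - 1 + u := by ring
  rw [h3] at h2
  nlinarith [h2, sq_nonneg u]

lemma expb3 (u : ℝ) (h0 : 0 ≤ u) (h1 : u ≤ 1) :
    |Real.exp (-u) - 1 + u - u ^ 2 / 2| ≤ u ^ 3 := by
  have habs : |(-u : ℝ)| ≤ 1 := by rw [abs_le]; constructor <;> nlinarith
  have := Real.exp_bound habs (n := 3) (by norm_num)
  simp only [Finset.sum_range_succ, Finset.sum_range_one, pow_zero, pow_one,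
    Nat.factorial_zero, Nat.factorial_one, Nat.factorial_two, Nat.cast_one, Nat.cast_ofNat] at this
  have h2 : |Real.exp (-u) - (1 + -u + (-u) ^ 2 / 2)| ≤ |(-u : ℝ)| ^ 3 * (4 / (6 * 3)) := by
    convert this using 3 <;> norm_num [Nat.factorial]
  rw [abs_neg, abs_of_nonneg h0] at h2
  have h3 : Real.exp (-u) - (1 + -u + (-u) ^ 2 / 2) = Real.exp (-u) - 1 + u - u ^ 2 / 2 := by ring
  rw [h3] at h2
  nlinarith [h2, pow_nonneg h0 3]

lemma norm4 {E : Type*} [NormedAddCommGroup E] (t1 t2 t3 t4 R : E) :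
    ‖t1 + t2 + t3 - t4 + R‖ ≤ ‖t1‖ + ‖t2‖ + ‖t3‖ + ‖t4‖ + ‖R‖ :=
  calc ‖t1 + t2 + t3 - t4 + R‖ ≤ ‖t1 + t2 + t3 - t4‖ + ‖R‖ := norm_add_le _ _
    _ ≤ (‖t1 + t2 + t3‖ + ‖t4‖) + ‖R‖ := by gcongr; exact norm_sub_le _ _
    _ ≤ ((‖t1 + t2‖ + ‖t3‖) + ‖t4‖) + ‖R‖ := by gcongr; exact norm_add_le _ _
    _ ≤ ‖t1‖ + ‖t2‖ + ‖t3‖ + ‖t4‖ + ‖R‖ := by gcongr; exact norm_add_le _ _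


set_option maxHeartbeats 3200000 in
/-- Auxiliary lemma: the leapfrog local-error estimate for a general `C²` force field `g`. -/
theorem leapfrog_aux {E : Type*} [NormedAddCommGroup E] [NormedSpace ℝ E]
    (g : E → E) (hg : ContDiff ℝ 2 g)
    (m γ T : ℝ) (hm : 0 < m) (hγ : 0 ≤ γ) (hT : 0 < T)
    (x p : ℝ → E)
    (hx : ∀ t ∈ Set.Icc (0 : ℝ) T,
      HasDerivWithinAt x ((1 / m) • p t) (Set.Icc 0 T) t)
    (hp : ∀ t ∈ Set.Icc (0 : ℝ) T,
      HasDerivWithinAt p (-(g (x t)) - γ • p t) (Set.Icc 0 T) t) :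
    ∃ C > 0, ∃ ε ∈ Set.Ioc (0 : ℝ) T, ∀ h ∈ Set.Ioc (0 : ℝ) ε,
      ‖((x 0 + (h / (2 * m)) • (Real.exp (-γ * h / 2) • p 0))
          + (h / (2 * m)) • (Real.exp (-γ * h / 2) • p 0
              - h • g (x 0 + (h / (2 * m)) • (Real.exp (-γ * h / 2) • p 0)))) - x h‖
        + ‖Real.exp (-γ * h / 2) • (Real.exp (-γ * h / 2) • p 0
              - h • g (x 0 + (h / (2 * m)) • (Real.exp (-γ * h / 2) • p 0))) - p h‖
        ≤ C * h ^ 3 := by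
  have hs : UniqueDiffOn ℝ (Icc (0:ℝ) T) := uniqueDiffOn_Icc hT
  have h0T : (0:ℝ) ∈ Icc (0:ℝ) T := ⟨le_rfl, hT.le⟩
  have hxd : DifferentiableOn ℝ x (Icc 0 T) := fun t ht => (hx t ht).differentiableWithinAt
  have hpd : DifferentiableOn ℝ p (Icc 0 T) := fun t ht => (hp t ht).differentiableWithinAt
  have hdx : ∀ t ∈ Icc (0:ℝ) T, derivWithin x (Icc 0 T) t = (fun t => (1 / m) • p t) t :=
    fun t ht => (hx t ht).derivWithin (hs t ht)
  have hdp : ∀ t ∈ Icc (0:ℝ) T, derivWithin p (Icc 0 T) t = (fun t => -(g (x t)) - γ • p t) t :=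
    fun t ht => (hp t ht).derivWithin (hs t ht)
  -- regularity of `x` and `p`
  have key : ∀ k : ℕ, k ≤ 2 →
      ContDiffOn ℝ (k+1) x (Icc 0 T) ∧ ContDiffOn ℝ (k+1) p (Icc 0 T) := by
    intro k
    induction k with
    | zero =>
      intro _
      refine ⟨(contDiffOn_succ_iff_derivWithin hs).mpr ⟨hxd, by simp, ?_⟩,
        (contDiffOn_succ_iff_derivWithin hs).mpr ⟨hpd, by simp, ?_⟩⟩
      · exact ((contDiffOn_zero.mpr (hpd.continuousOn.const_smul (1/m)))).congr hdx
      · exact (contDiffOn_zero.mpr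
          (((hg.continuous.comp_continuousOn hxd.continuousOn).neg).sub
            (hpd.continuousOn.const_smul γ))).congr hdp
    | succ k ih =>
      intro hk
      obtain ⟨cx, cp⟩ := ih (le_of_lt hk)
      refine ⟨(contDiffOn_succ_iff_derivWithin hs).mpr ⟨hxd, by simp, ?_⟩,
        (contDiffOn_succ_iff_derivWithin hs).mpr ⟨hpd, by simp, ?_⟩⟩
      · exact (cp.const_smul (1/m)).congr hdx
      · have hgk : ContDiff ℝ ((k+1:ℕ)) g :=
          hg.of_le (by exact_mod_cast Nat.cast_le.mpr hk)
        exact ((hgk.comp_contDiffOn cx).neg.sub (cp.const_smul γ)).congr hdp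
  obtain ⟨x3, p3⟩ := key 2 le_rfl
  -- iterated derivatives of `x` and `p` at `0`
  have i1x : iteratedDerivWithin 1 x (Icc 0 T) 0 = (1/m) • p 0 := by
    rw [iteratedDerivWithin_one]; exact hdx 0 h0T
  have i1p : iteratedDerivWithin 1 p (Icc 0 T) 0 = -(g (x 0)) - γ • p 0 := by
    rw [iteratedDerivWithin_one]; exact hdp 0 h0T
  have i2x : iteratedDerivWithin 2 x (Icc 0 T) 0 = (1/m) • (-(g (x 0)) - γ • p 0) := by
    rw [iteratedDerivWithin_succ]
    have eq1 : EqOn (iteratedDerivWithin 1 x (Icc 0 T)) (fun t => (1/m) • p t) (Icc 0 T) :=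
      fun y hy => by rw [iteratedDerivWithin_one]; exact hdx y hy
    rw [derivWithin_congr eq1 (by rw [i1x])]
    exact ((hp 0 h0T).const_smul (1/m)).derivWithin (hs 0 h0T)
  have hgx0 : HasDerivWithinAt (fun t => g (x t))
      ((fderiv ℝ g (x 0)) ((1/m) • p 0)) (Icc 0 T) 0 :=
    (hg.differentiable (by norm_num) (x 0)).hasFDerivAt.comp_hasDerivWithinAt 0 (hx 0 h0T)
  have i2p : iteratedDerivWithin 2 p (Icc 0 T) 0 =
      -((fderiv ℝ g (x 0)) ((1/m) • p 0)) - γ • (-(g (x 0)) - γ • p 0) := by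
    rw [iteratedDerivWithin_succ]
    have eq1 : EqOn (iteratedDerivWithin 1 p (Icc 0 T)) (fun t => -(g (x t)) - γ • p t) (Icc 0 T) :=
      fun y hy => by rw [iteratedDerivWithin_one]; exact hdp y hy
    rw [derivWithin_congr eq1 (by rw [i1p])]
    exact (hgx0.neg.sub ((hp 0 h0T).const_smul γ)).derivWithin (hs 0 h0T)
  -- explicit Taylor polynomials of `x` and `p`
  have TXeq : ∀ h : ℝ, taylorWithinEval x 2 (Icc 0 T) 0 h
      = x 0 + h • ((1/m) • p 0) + ((2:ℝ)⁻¹ * h^2) • ((1/m) • (-(g (x 0)) - γ • p 0)) := by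
    intro h
    rw [taylor_within_apply]
    simp [Finset.sum_range_succ, i1x, i2x]
  have TPeq : ∀ h : ℝ, taylorWithinEval p 2 (Icc 0 T) 0 h
      = p 0 + h • (-(g (x 0)) - γ • p 0)
        + ((2:ℝ)⁻¹ * h^2) • (-((fderiv ℝ g (x 0)) ((1/m) • p 0)) - γ • (-(g (x 0)) - γ • p 0)) := by
    intro h
    rw [taylor_within_apply]
    simp [Finset.sum_range_succ, i1p, i2p]
  -- the map `ψ` giving the force evaluated at the half-step point
  set q : ℝ → E := fun h => x 0 + (h / (2 * m)) • (Real.exp (-γ * h / 2) • p 0) with hqdef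
  set ψ : ℝ → E := fun h => g (q h) with hψdef
  have hq' : q = fun h => x 0 + ((h / (2 * m)) * Real.exp (-γ * h / 2)) • p 0 := by
    funext h; simp only [hqdef, smul_smul]
  have hq0 : q 0 = x 0 := by rw [hqdef]; simp
  have hψ0 : ψ 0 = g (x 0) := by rw [hψdef]; simp [hq0]
  have hqc : ContDiff ℝ 2 q := by
    rw [hq']
    exact contDiff_const.add (((contDiff_id.div_const _).mul
      (Real.contDiff_exp.comp ((contDiff_const.mul contDiff_id).div_const _))).smul contDiff_const)
  have hψc : ContDiff ℝ 2 ψ := hg.comp hqc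
  -- the derivative of `ψ` at `0`
  have hu : HasDerivAt (fun h : ℝ => (h / (2 * m)) * Real.exp (-γ * h / 2)) (1 / (2 * m)) 0 := by
    have h1 : HasDerivAt (fun h : ℝ => h / (2 * m)) (1 / (2 * m)) 0 :=
      (hasDerivAt_id 0).div_const _
    have hin : HasDerivAt (fun h : ℝ => -γ * h / 2) (-γ / 2) 0 := by
      simpa using ((hasDerivAt_id (0:ℝ)).const_mul (-γ)).div_const 2
    have h2 : HasDerivAt (fun h : ℝ => Real.exp (-γ * h / 2))
        (Real.exp (-γ * 0 / 2) * (-γ / 2)) 0 := hin.exp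
    have := h1.fun_mul h2
    simpa using this
  have hqd : HasDerivAt q ((1 / (2 * m)) • p 0) 0 := by
    rw [hq']
    exact ((hu.smul_const (p 0)).const_add (x 0))
  have hψd : HasDerivAt ψ ((fderiv ℝ g (x 0)) ((1 / (2 * m)) • p 0)) 0 := by
    have := (hg.differentiable (by norm_num) (q 0)).hasFDerivAt.comp_hasDerivAt 0 hqd
    rw [hq0] at this
    exact this
  have dψeq : derivWithin ψ (Icc 0 T) 0 = (fderiv ℝ g (x 0)) ((1 / (2 * m)) • p 0) :=
    (hψd.hasDerivWithinAt).derivWithin (hs 0 h0T)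
  have Tψeq : ∀ h : ℝ, taylorWithinEval ψ 1 (Icc 0 T) 0 h
      = ψ 0 + h • ((fderiv ℝ g (x 0)) ((1 / (2 * m)) • p 0)) := by
    intro h
    rw [taylor_within_apply]
    simp [Finset.sum_range_succ, iteratedDerivWithin_one, dψeq]
  -- Taylor remainder bounds
  obtain ⟨Cx, hCx⟩ := exists_taylor_mean_remainder_bound (n := 2) hT.le
    (by exact_mod_cast x3 : ContDiffOn ℝ ((2:ℕ) + 1) x (Icc 0 T))
  obtain ⟨Cp, hCp⟩ := exists_taylor_mean_remainder_bound (n := 2) hT.le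
    (by exact_mod_cast p3 : ContDiffOn ℝ ((2:ℕ) + 1) p (Icc 0 T))
  obtain ⟨Cψ1, hCψ1⟩ := exists_taylor_mean_remainder_bound (n := 1) hT.le
    ((hψc.contDiffOn (s := Icc 0 T)).of_le (by exact_mod_cast le_rfl))
  obtain ⟨Cψ0, hCψ0⟩ := exists_taylor_mean_remainder_bound (n := 0) hT.le
    ((hψc.contDiffOn (s := Icc 0 T)).of_le (by exact_mod_cast one_le_two))
  -- the gradient direction
  set dψv : E := (fderiv ℝ g (x 0)) ((1 / (2 * m)) • p 0) with hdψdef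
  have hDg : (fderiv ℝ g (x 0)) ((1 / m) • p 0) = (2:ℝ) • dψv := by
    have h2 : ((1:ℝ) / m) • p 0 = (2:ℝ) • ((1 / (2 * m)) • p 0) := by
      rw [smul_smul]; congr 1; field_simp
    rw [h2, map_smul, hdψdef]
  -- the step size bound and the constant
  set ε : ℝ := min T (1 / (γ + 1)) with hεdef
  have hε0 : 0 < ε := lt_min hT (by positivity)
  have hεT : ε ≤ T := min_le_left _ _
  set S : ℝ := Cx + Cp + Cψ1 + γ^2 * ‖p 0‖ / (4*m) + Cψ0 / (2*m) + γ^3 * ‖p 0‖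
      + γ^2 * ‖ψ 0‖ / 4 + γ * ‖dψv‖ with hSdef
  refine ⟨max S 1, lt_of_lt_of_le one_pos (le_max_right _ _), ε, ⟨hε0, hεT⟩, ?_⟩
  intro h hh
  obtain ⟨hh0, hhε⟩ := hh
  have hhT : h ∈ Icc (0:ℝ) T := ⟨hh0.le, hhε.trans hεT⟩
  have hγ1 : h * (γ + 1) ≤ 1 :=
    (le_div_iff₀ (by positivity)).mp (hhε.trans (min_le_right _ _))
  have hγh : γ * h ≤ 1 := by nlinarith
  have hγh2 : 0 ≤ γ * h / 2 := by positivity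
  set e : ℝ := Real.exp (-γ * h / 2) with hedef
  have hneg : (-γ * h / 2 : ℝ) = -(γ * h / 2) := by ring
  have he1 : e ≤ 1 := by rw [hedef, hneg]; exact Real.exp_le_one_iff.mpr (by linarith)
  have he0 : 0 < e := Real.exp_pos _
  have b1 : |e - 1| ≤ γ * h := by
    rw [hedef, hneg]
    have := expb1 (γ * h / 2) hγh2 (by linarith)
    calc |Real.exp (-(γ * h / 2)) - 1| ≤ 2 * (γ * h / 2) := this
      _ = γ * h := by ring
  have b2 : |e - 1 + γ * h / 2| ≤ (γ * h / 2) ^ 2 := by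
    rw [hedef, hneg]; exact expb2 (γ * h / 2) hγh2 (by linarith)
  have hee : e * e = Real.exp (-(γ * h)) := by
    rw [hedef, ← Real.exp_add]; congr 1; ring
  have b3 : |e * e - (1 - γ * h + γ^2 * h^2 / 2)| ≤ (γ * h) ^ 3 := by
    have h4 : e * e - (1 - γ * h + γ^2 * h^2 / 2)
        = Real.exp (-(γ * h)) - 1 + γ * h - (γ * h) ^ 2 / 2 := by rw [hee]; ring
    rw [h4]
    exact expb3 (γ * h) (by positivity) hγh
  -- remainder bounds at this h
  have hXrem : ‖x h - taylorWithinEval x 2 (Icc 0 T) 0 h‖ ≤ Cx * h ^ 3 := by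
    have := hCx h hhT; simpa using this
  have hPrem : ‖p h - taylorWithinEval p 2 (Icc 0 T) 0 h‖ ≤ Cp * h ^ 3 := by
    have := hCp h hhT; simpa using this
  have hψlip : ‖ψ h - ψ 0‖ ≤ Cψ0 * h := by
    have := hCψ0 h hhT
    simpa [taylor_within_zero_eval] using this
  have hψR : ‖ψ h - (ψ 0 + h • dψv)‖ ≤ Cψ1 * h ^ 2 := by
    have := hCψ1 h hhT
    rw [Tψeq h] at this
    simpa using this
  have hψh : g (x 0 + (h / (2 * m)) • (e • p 0)) = ψ h := rfl
  rw [hψh]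
  -- the position error
  have idA : (x 0 + (h / (2 * m)) • (e • p 0)) + (h / (2 * m)) • (e • p 0 - h • ψ h) - x h
      = (((h / m) * (e - 1 + γ * h / 2)) • p 0 - (h ^ 2 / (2 * m)) • (ψ h - ψ 0))
        + (taylorWithinEval x 2 (Icc 0 T) 0 h - x h) := by
    rw [TXeq h, ← hψ0]; module
  have hA : ‖(x 0 + (h / (2 * m)) • (e • p 0)) + (h / (2 * m)) • (e • p 0 - h • ψ h) - x h‖
      ≤ (γ^2 * ‖p 0‖ / (4*m) + Cψ0 / (2*m) + Cx) * h ^ 3 := by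
    rw [idA]
    calc ‖(((h / m) * (e - 1 + γ * h / 2)) • p 0 - (h ^ 2 / (2 * m)) • (ψ h - ψ 0))
          + (taylorWithinEval x 2 (Icc 0 T) 0 h - x h)‖
        ≤ ‖((h / m) * (e - 1 + γ * h / 2)) • p 0‖ + ‖(h ^ 2 / (2 * m)) • (ψ h - ψ 0)‖
          + ‖taylorWithinEval x 2 (Icc 0 T) 0 h - x h‖ := by
          refine (norm_add_le _ _).trans ?_
          gcongr
          exact norm_sub_le _ _
      _ ≤ (h / m) * ((γ * h / 2) ^ 2) * ‖p 0‖ + (h ^ 2 / (2 * m)) * (Cψ0 * h)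
          + Cx * h ^ 3 := by
          have e1 : ‖((h / m) * (e - 1 + γ * h / 2)) • p 0‖
              ≤ (h / m) * ((γ * h / 2) ^ 2) * ‖p 0‖ := by
            rw [norm_smul, Real.norm_eq_abs, abs_mul, abs_of_nonneg (by positivity : (0:ℝ) ≤ h / m)]
            gcongr
          have e2 : ‖(h ^ 2 / (2 * m)) • (ψ h - ψ 0)‖ ≤ (h ^ 2 / (2 * m)) * (Cψ0 * h) := by
            rw [norm_smul, Real.norm_eq_abs,
              abs_of_nonneg (by positivity : (0:ℝ) ≤ h ^ 2 / (2 * m))]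
            gcongr
          have e3 : ‖taylorWithinEval x 2 (Icc 0 T) 0 h - x h‖ ≤ Cx * h ^ 3 := by rw [norm_sub_rev]; exact hXrem
          exact add_le_add (add_le_add e1 e2) e3
      _ = (γ^2 * ‖p 0‖ / (4*m) + Cψ0 / (2*m) + Cx) * h ^ 3 := by ring
  -- the momentum error
  have idB : e • (e • p 0 - h • ψ h) - p h
      = ((e * e - (1 - γ * h + γ^2 * h^2 / 2)) • p 0 + (h - h * e - γ * h^2 / 2) • ψ 0
          + (h ^ 2 - h ^ 2 * e) • dψv - (h * e) • (ψ h - (ψ 0 + h • dψv)))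
        + (taylorWithinEval p 2 (Icc 0 T) 0 h - p h) := by
    rw [TPeq h, ← hψ0, hDg]; module
  have hB : ‖e • (e • p 0 - h • ψ h) - p h‖
      ≤ (γ^3 * ‖p 0‖ + γ^2 * ‖ψ 0‖ / 4 + γ * ‖dψv‖ + Cψ1 + Cp) * h ^ 3 := by
    rw [idB]
    have step1 : ‖(e * e - (1 - γ * h + γ^2 * h^2 / 2)) • p 0 + (h - h * e - γ * h^2 / 2) • ψ 0
          + (h ^ 2 - h ^ 2 * e) • dψv - (h * e) • (ψ h - (ψ 0 + h • dψv))
        + (taylorWithinEval p 2 (Icc 0 T) 0 h - p h)‖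
        ≤ ‖(e * e - (1 - γ * h + γ^2 * h^2 / 2)) • p 0‖ + ‖(h - h * e - γ * h^2 / 2) • ψ 0‖
          + ‖(h ^ 2 - h ^ 2 * e) • dψv‖ + ‖(h * e) • (ψ h - (ψ 0 + h • dψv))‖
          + ‖taylorWithinEval p 2 (Icc 0 T) 0 h - p h‖ := norm4 _ _ _ _ _
    refine step1.trans ?_
    have e1 : ‖(e * e - (1 - γ * h + γ^2 * h^2 / 2)) • p 0‖ ≤ (γ * h) ^ 3 * ‖p 0‖ := by
      rw [norm_smul, Real.norm_eq_abs]
      exact mul_le_mul_of_nonneg_right b3 (norm_nonneg _)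
    have e2 : ‖(h - h * e - γ * h^2 / 2) • ψ 0‖ ≤ h * (γ * h / 2) ^ 2 * ‖ψ 0‖ := by
      rw [norm_smul, Real.norm_eq_abs]
      have habs : |h - h * e - γ * h^2 / 2| ≤ h * (γ * h / 2) ^ 2 := by
        have hid : h - h * e - γ * h^2 / 2 = -(h * (e - 1 + γ * h / 2)) := by ring
        rw [hid, abs_neg, abs_mul, abs_of_nonneg hh0.le]
        gcongr
      exact mul_le_mul_of_nonneg_right habs (norm_nonneg _)
    have e3 : ‖(h ^ 2 - h ^ 2 * e) • dψv‖ ≤ h ^ 2 * (γ * h) * ‖dψv‖ := by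
      rw [norm_smul, Real.norm_eq_abs]
      have habs : |h ^ 2 - h ^ 2 * e| ≤ h ^ 2 * (γ * h) := by
        have hid : h ^ 2 - h ^ 2 * e = -(h ^ 2 * (e - 1)) := by ring
        rw [hid, abs_neg, abs_mul, abs_of_nonneg (by positivity : (0:ℝ) ≤ h ^ 2)]
        gcongr
      exact mul_le_mul_of_nonneg_right habs (norm_nonneg _)
    have e4 : ‖(h * e) • (ψ h - (ψ 0 + h • dψv))‖ ≤ h * (Cψ1 * h ^ 2) := by
      rw [norm_smul, Real.norm_eq_abs, abs_of_nonneg (by positivity : (0:ℝ) ≤ h * e)]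
      calc h * e * ‖ψ h - (ψ 0 + h • dψv)‖ ≤ h * 1 * (Cψ1 * h ^ 2) := by
            apply mul_le_mul
            · nlinarith
            · exact hψR
            · exact norm_nonneg _
            · positivity
        _ = h * (Cψ1 * h ^ 2) := by ring
    have e5 : ‖taylorWithinEval p 2 (Icc 0 T) 0 h - p h‖ ≤ Cp * h ^ 3 := by
      rw [norm_sub_rev]; exact hPrem
    calc ‖(e * e - (1 - γ * h + γ^2 * h^2 / 2)) • p 0‖ + ‖(h - h * e - γ * h^2 / 2) • ψ 0‖
          + ‖(h ^ 2 - h ^ 2 * e) • dψv‖ + ‖(h * e) • (ψ h - (ψ 0 + h • dψv))‖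
          + ‖taylorWithinEval p 2 (Icc 0 T) 0 h - p h‖
        ≤ (γ * h) ^ 3 * ‖p 0‖ + h * (γ * h / 2) ^ 2 * ‖ψ 0‖ + h ^ 2 * (γ * h) * ‖dψv‖
          + h * (Cψ1 * h ^ 2) + Cp * h ^ 3 :=
          add_le_add (add_le_add (add_le_add (add_le_add e1 e2) e3) e4) e5
      _ = (γ^3 * ‖p 0‖ + γ^2 * ‖ψ 0‖ / 4 + γ * ‖dψv‖ + Cψ1 + Cp) * h ^ 3 := by ring
  have hsum := add_le_add hA hB
  have hfin : (γ^2 * ‖p 0‖ / (4*m) + Cψ0 / (2*m) + Cx) * h ^ 3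
      + (γ^3 * ‖p 0‖ + γ^2 * ‖ψ 0‖ / 4 + γ * ‖dψv‖ + Cψ1 + Cp) * h ^ 3 ≤ max S 1 * h ^ 3 := by
    have hS : S * h ^ 3 ≤ max S 1 * h ^ 3 :=
      mul_le_mul_of_nonneg_right (le_max_left _ _) (by positivity)
    calc (γ^2 * ‖p 0‖ / (4*m) + Cψ0 / (2*m) + Cx) * h ^ 3
        + (γ^3 * ‖p 0‖ + γ^2 * ‖ψ 0‖ / 4 + γ * ‖dψv‖ + Cψ1 + Cp) * h ^ 3
        = S * h ^ 3 := by rw [hSdef]; ring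
      _ ≤ max S 1 * h ^ 3 := hS
  exact hsum.trans hfin

/-- the dissipative leapfrog method has local error of order `h³`
(it is an integrator of order 2) for the conformal Hamiltonian system
`ẋ = p/m`, `ṗ = −∇f(x) − γp`.  The step from the initial condition is
`x̃ = x(0) + (h/(2m)) e^{−γh/2} p(0)`, `p̃ = e^{−γh/2} p(0) − h ∇f(x̃)`,
`X = x̃ + (h/(2m)) p̃`, `P = e^{−γh/2} p̃`. -/
theorem leapfrog_local_error_order_two
    {n : ℕ} (f : EuclideanSpace ℝ (Fin n) → ℝ) (hf : ContDiff ℝ 3 f)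
    (m γ T : ℝ) (hm : 0 < m) (hγ : 0 ≤ γ) (hT : 0 < T)
    (x p : ℝ → EuclideanSpace ℝ (Fin n))
    (hx : ∀ t ∈ Set.Icc (0 : ℝ) T,
      HasDerivWithinAt x ((1 / m) • p t) (Set.Icc 0 T) t)
    (hp : ∀ t ∈ Set.Icc (0 : ℝ) T,
      HasDerivWithinAt p (-(gradient f (x t)) - γ • p t) (Set.Icc 0 T) t) :
    ∃ C > 0, ∃ ε ∈ Set.Ioc (0 : ℝ) T, ∀ h ∈ Set.Ioc (0 : ℝ) ε,
      ‖((x 0 + (h / (2 * m)) • (Real.exp (-γ * h / 2) • p 0))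
          + (h / (2 * m)) • (Real.exp (-γ * h / 2) • p 0
              - h • gradient f (x 0 + (h / (2 * m)) • (Real.exp (-γ * h / 2) • p 0)))) - x h‖
        + ‖Real.exp (-γ * h / 2) • (Real.exp (-γ * h / 2) • p 0
              - h • gradient f (x 0 + (h / (2 * m)) • (Real.exp (-γ * h / 2) • p 0))) - p h‖
        ≤ C * h ^ 3 := by
  have hg : ContDiff ℝ 2 (gradient f) := by
    have hgr : gradient f = fun y =>
        (InnerProductSpace.toDual ℝ (EuclideanSpace ℝ (Fin n))).symm (fderiv ℝ f y) := rfl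
    rw [hgr]
    exact (InnerProductSpace.toDual ℝ (EuclideanSpace ℝ (Fin n))).symm.contDiff.comp
      (hf.fderiv_right (by norm_num))
  exact leapfrog_aux (gradient f) hg m γ T hm hγ hT x p hx hp
end

section
/- Let f : ℝⁿ → ℝ be twice continuously differentiable, m > 0, γ ≥ 0, T > 0, and let (x, p) : [0, T] → ℝⁿ × ℝⁿ be a solution of ẋ = p/m, ṗ = −∇f(x) − γ p. For h > 0 define one Nesterov step from the initial condition: x_{1/2,h} = x(0) + (h/m) e^{−γh} p(0), P_h = e^{−γh} p(0) − h ∇f(x_{1/2,h}), X_h = x(0) + (h/m) P_h. Then Nesterov's method has local error of order h² (i.e., it is an integrator of order 1 for this system): there exist constants C > 0 and ε ∈ (0, T] such that for all h ∈ (0, ε], ‖X_h − x(h)‖ + ‖P_h − p(h)‖ ≤ C h². -/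
lemma taylor_bound_aux {E : Type*} [NormedAddCommGroup E] [NormedSpace ℝ E]
    (g g' : ℝ → E) (h K : ℝ) (hh : 0 ≤ h)
    (hd : ∀ t ∈ Set.Icc (0:ℝ) h, HasDerivWithinAt g (g' t) (Set.Icc (0:ℝ) h) t)
    (hb : ∀ t ∈ Set.Icc (0:ℝ) h, ‖g' t - g' 0‖ ≤ K * h) :
    ‖g h - g 0 - h • g' 0‖ ≤ K * h ^ 2 := by
  have hmem0 : (0:ℝ) ∈ Set.Icc (0:ℝ) h := ⟨le_rfl, hh⟩
  have hmemh : h ∈ Set.Icc (0:ℝ) h := ⟨hh, le_rfl⟩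
  have hid : ∀ t : ℝ, HasDerivAt (fun s : ℝ => s • g' 0) (g' 0) t := fun t => by
    simpa using (hasDerivAt_id t).smul_const (g' 0)
  have key := (convex_Icc (0:ℝ) h).norm_image_sub_le_of_norm_hasDerivWithin_le
    (f := fun t => g t - t • g' 0) (f' := fun t => g' t - g' 0) (C := K * h)
    (fun t ht => (hd t ht).sub ((hid t).hasDerivWithinAt)) hb hmem0 hmemh
  simp only [zero_smul, sub_zero] at key
  calc ‖g h - g 0 - h • g' 0‖ = ‖(g h - h • g' 0) - g 0‖ := by rw [sub_right_comm]
    _ ≤ K * h * ‖h‖ := key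
    _ = K * h ^ 2 := by rw [Real.norm_eq_abs, abs_of_nonneg hh]; ring

set_option maxHeartbeats 1600000 in
/-- Nesterov's method has local error of order `h²` (it is an
integrator of order 1) for the conformal Hamiltonian system
`ẋ = p/m`, `ṗ = −∇f(x) − γp`.  The step from the initial condition is
`x_{1/2} = x(0) + (h/m) e^{−γh} p(0)`, `P = e^{−γh} p(0) − h ∇f(x_{1/2})`,
`X = x(0) + (h/m) P`. -/
theorem nesterov_local_error_order_one
    {n : ℕ} (f : EuclideanSpace ℝ (Fin n) → ℝ) (hf : ContDiff ℝ 2 f)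
    (m γ T : ℝ) (hm : 0 < m) (hγ : 0 ≤ γ) (hT : 0 < T)
    (x p : ℝ → EuclideanSpace ℝ (Fin n))
    (hx : ∀ t ∈ Set.Icc (0 : ℝ) T,
      HasDerivWithinAt x ((1 / m) • p t) (Set.Icc 0 T) t)
    (hp : ∀ t ∈ Set.Icc (0 : ℝ) T,
      HasDerivWithinAt p (-(gradient f (x t)) - γ • p t) (Set.Icc 0 T) t) :
    ∃ C > 0, ∃ ε ∈ Set.Ioc (0 : ℝ) T, ∀ h ∈ Set.Ioc (0 : ℝ) ε,
      ‖(x 0 + (h / m) • (Real.exp (-γ * h) • p 0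
          - h • gradient f (x 0 + (h / m) • (Real.exp (-γ * h) • p 0)))) - x h‖
        + ‖(Real.exp (-γ * h) • p 0
          - h • gradient f (x 0 + (h / m) • (Real.exp (-γ * h) • p 0))) - p h‖
        ≤ C * h ^ 2 := by
  have h0T : (0:ℝ) ∈ Set.Icc (0:ℝ) T := ⟨le_rfl, hT.le⟩
  have hxc : ContinuousOn x (Set.Icc 0 T) := fun t ht => (hx t ht).continuousWithinAt
  have hpc : ContinuousOn p (Set.Icc 0 T) := fun t ht => (hp t ht).continuousWithinAt
  obtain ⟨Mp, hMp⟩ := isCompact_Icc.exists_bound_of_continuousOn hpc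
  obtain ⟨Mx, hMx⟩ := isCompact_Icc.exists_bound_of_continuousOn hxc
  have hMp0 : 0 ≤ Mp := le_trans (norm_nonneg _) (hMp 0 h0T)
  have hMx0 : 0 ≤ Mx := le_trans (norm_nonneg _) (hMx 0 h0T)
  -- gradient is C¹
  have hg1 : ContDiff ℝ 1 (gradient f) := by
    have h2 : ContDiff ℝ 1 (fderiv ℝ f) := hf.fderiv_right (by norm_num)
    exact ((InnerProductSpace.toDual ℝ (EuclideanSpace ℝ (Fin n)))).symm.contDiff.comp h2
  -- compact convex set containing all relevant points
  set R : ℝ := Mx + (T / m) * Mp + 1 with hR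
  have hR0 : 0 ≤ R := by positivity
  set K : Set (EuclideanSpace ℝ (Fin n)) := Metric.closedBall 0 R with hKdef
  have hKc : IsCompact K := isCompact_closedBall _ _
  have hKconv : Convex ℝ K := convex_closedBall _ _
  obtain ⟨G, hG⟩ := hKc.exists_bound_of_continuousOn (hg1.continuous.continuousOn)
  obtain ⟨Lf, hLfB⟩ :=
    hKc.exists_bound_of_continuousOn ((hg1.continuous_fderiv one_ne_zero).continuousOn)
  have h0K : (0 : EuclideanSpace ℝ (Fin n)) ∈ K := by
    simp [hKdef, mem_closedBall_zero_iff, hR0]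
  have hG0 : 0 ≤ G := le_trans (norm_nonneg _) (hG 0 h0K)
  have hLf0 : 0 ≤ Lf := le_trans (norm_nonneg _) (hLfB 0 h0K)
  have hLf : ∀ a ∈ K, ∀ b ∈ K, ‖gradient f a - gradient f b‖ ≤ Lf * ‖a - b‖ :=
    fun a ha b hb => hKconv.norm_image_sub_le_of_norm_fderiv_le
      (fun z _ => (hg1.differentiable one_ne_zero).differentiableAt) hLfB hb ha
  have hxK : ∀ t ∈ Set.Icc (0:ℝ) T, x t ∈ K := by
    intro t ht
    rw [hKdef, mem_closedBall_zero_iff, hR]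
    have := hMx t ht
    nlinarith [mul_nonneg (div_nonneg hT.le hm.le) hMp0]
  -- bound on p'
  set M' : ℝ := G + γ * Mp with hM'
  have hM'0 : 0 ≤ M' := by positivity
  have hp'bd : ∀ t ∈ Set.Icc (0:ℝ) T, ‖-(gradient f (x t)) - γ • p t‖ ≤ M' := by
    intro t ht
    calc ‖-(gradient f (x t)) - γ • p t‖ ≤ ‖-(gradient f (x t))‖ + ‖γ • p t‖ := norm_sub_le _ _
      _ = ‖gradient f (x t)‖ + γ * ‖p t‖ := by
          rw [norm_neg, norm_smul, Real.norm_eq_abs, abs_of_nonneg hγ]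
      _ ≤ G + γ * Mp := add_le_add (hG _ (hxK t ht)) (mul_le_mul_of_nonneg_left (hMp t ht) hγ)
  -- Lipschitz bounds for p and x on [0,T]
  have hpLip : ∀ t ∈ Set.Icc (0:ℝ) T, ‖p t - p 0‖ ≤ M' * t := by
    intro t ht
    have := (convex_Icc (0:ℝ) T).norm_image_sub_le_of_norm_hasDerivWithin_le hp hp'bd h0T ht
    simpa [Real.norm_eq_abs, abs_of_nonneg ht.1] using this
  have hxLip : ∀ t ∈ Set.Icc (0:ℝ) T, ‖x t - x 0‖ ≤ (Mp / m) * t := by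
    intro t ht
    have hb : ∀ s ∈ Set.Icc (0:ℝ) T, ‖(1 / m) • p s‖ ≤ Mp / m := by
      intro s hs
      rw [norm_smul, Real.norm_eq_abs, abs_of_nonneg (by positivity : (0:ℝ) ≤ 1 / m)]
      rw [div_eq_mul_inv Mp m, mul_comm Mp, ← one_div]
      exact mul_le_mul_of_nonneg_left (hMp s hs) (by positivity)
    have := (convex_Icc (0:ℝ) T).norm_image_sub_le_of_norm_hasDerivWithin_le hx hb h0T ht
    simpa [Real.norm_eq_abs, abs_of_nonneg ht.1] using this
  -- constants
  set Kp : ℝ := Lf * Mp / m + γ * M' with hKp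
  have hKp0 : 0 ≤ Kp := by positivity
  set Cp : ℝ := γ ^ 2 * Mp + Lf * Mp / m + Kp with hCp
  have hCp0 : 0 ≤ Cp := by positivity
  set Cx : ℝ := Cp / m + M' / m + M' / m with hCx
  have hCx0 : 0 ≤ Cx := by positivity
  refine ⟨Cx + Cp + 1, by positivity, min T (min 1 (1 / (γ + 1))), ⟨?_, min_le_left _ _⟩, ?_⟩
  · have h1 : (0:ℝ) < 1 / (γ + 1) := by positivity
    exact lt_min hT (lt_min one_pos h1)
  intro h hh
  obtain ⟨hh0, hhε⟩ := hh
  have hhT : h ≤ T := le_trans hhε (min_le_left _ _)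
  have hh1 : h ≤ 1 := le_trans hhε (le_trans (min_le_right _ _) (min_le_left _ _))
  have hhγ1 : γ * h ≤ 1 := by
    have h1 : h ≤ 1 / (γ + 1) := le_trans hhε (le_trans (min_le_right _ _) (min_le_right _ _))
    have h2 : γ * h ≤ γ * (1 / (γ + 1)) := mul_le_mul_of_nonneg_left h1 hγ
    have h3 : γ * (1 / (γ + 1)) ≤ 1 := by
      rw [mul_one_div, div_le_one (by positivity)]; linarith
    linarith
  have hsub : Set.Icc (0:ℝ) h ⊆ Set.Icc (0:ℝ) T :=
    Set.Icc_subset_Icc le_rfl hhT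
  have hhIcc : ∀ t ∈ Set.Icc (0:ℝ) h, t ∈ Set.Icc (0:ℝ) T := fun t ht => hsub ht
  -- Taylor estimate for x
  have hTx : ‖x h - x 0 - h • ((1 / m) • p 0)‖ ≤ (M' / m) * h ^ 2 := by
    apply taylor_bound_aux x (fun t => (1 / m) • p t) h (M' / m) hh0.le
      (fun t ht => (hx t (hhIcc t ht)).mono hsub)
    intro t ht
    rw [← smul_sub, norm_smul, Real.norm_eq_abs,
      abs_of_nonneg (by positivity : (0:ℝ) ≤ 1 / m)]
    have h1 : ‖p t - p 0‖ ≤ M' * t := hpLip t (hhIcc t ht)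
    have h2 : M' * t ≤ M' * h := mul_le_mul_of_nonneg_left ht.2 hM'0
    have h3 : (0:ℝ) < 1 / m := by positivity
    calc (1 / m) * ‖p t - p 0‖ ≤ (1 / m) * (M' * h) :=
          mul_le_mul_of_nonneg_left (le_trans h1 h2) h3.le
      _ = M' / m * h := by ring
  -- Taylor estimate for p
  have hTp : ‖p h - p 0 - h • (-(gradient f (x 0)) - γ • p 0)‖ ≤ Kp * h ^ 2 := by
    apply taylor_bound_aux p (fun t => -(gradient f (x t)) - γ • p t) h Kp hh0.le
      (fun t ht => (hp t (hhIcc t ht)).mono hsub)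
    intro t ht
    have hteq : (-(gradient f (x t)) - γ • p t) - (-(gradient f (x 0)) - γ • p 0)
        = -(gradient f (x t) - gradient f (x 0)) - γ • (p t - p 0) := by
      rw [smul_sub]; abel
    rw [hteq]
    have h1 : ‖gradient f (x t) - gradient f (x 0)‖ ≤ Lf * ((Mp / m) * t) := by
      refine le_trans (hLf _ (hxK t (hhIcc t ht)) _ (hxK 0 h0T)) ?_
      exact mul_le_mul_of_nonneg_left (hxLip t (hhIcc t ht)) hLf0
    have h2 : ‖p t - p 0‖ ≤ M' * t := hpLip t (hhIcc t ht)
    calc ‖-(gradient f (x t) - gradient f (x 0)) - γ • (p t - p 0)‖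
        ≤ ‖gradient f (x t) - gradient f (x 0)‖ + γ * ‖p t - p 0‖ := by
          refine le_trans (norm_sub_le _ _) ?_
          rw [norm_neg, norm_smul, Real.norm_eq_abs, abs_of_nonneg hγ]
      _ ≤ Lf * ((Mp / m) * t) + γ * (M' * t) :=
          add_le_add h1 (mul_le_mul_of_nonneg_left h2 hγ)
      _ ≤ Lf * ((Mp / m) * h) + γ * (M' * h) :=
          add_le_add
            (mul_le_mul_of_nonneg_left
              (mul_le_mul_of_nonneg_left ht.2 (by positivity)) hLf0)
            (mul_le_mul_of_nonneg_left
              (mul_le_mul_of_nonneg_left ht.2 hM'0) hγ)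
      _ = Kp * h := by rw [hKp]; ring
  -- exponential estimate
  set e : ℝ := Real.exp (-γ * h) with he
  have he1 : e ≤ 1 := Real.exp_le_one_iff.mpr (by nlinarith)
  have he0 : 0 < e := Real.exp_pos _
  have heT : |e - 1 + γ * h| ≤ γ ^ 2 * h ^ 2 := by
    have habs : |(-γ * h)| ≤ 1 := by
      rw [abs_of_nonpos (by nlinarith)]; nlinarith
    have := Real.abs_exp_sub_one_sub_id_le habs
    calc |e - 1 + γ * h| = |Real.exp (-γ * h) - 1 - (-γ * h)| := by rw [he]; ring_nf
      _ ≤ (-γ * h) ^ 2 := this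
      _ = γ ^ 2 * h ^ 2 := by ring
  -- midpoint membership and gradient difference
  set xhalf : EuclideanSpace ℝ (Fin n) := x 0 + (h / m) • (e • p 0) with hxh
  have hxhalfK : xhalf ∈ K := by
    rw [hKdef, mem_closedBall_zero_iff]
    have h1 : ‖xhalf‖ ≤ ‖x 0‖ + (h / m) * (e * ‖p 0‖) := by
      refine le_trans (norm_add_le _ _) ?_
      rw [norm_smul, norm_smul, Real.norm_eq_abs, Real.norm_eq_abs,
        abs_of_nonneg (by positivity : (0:ℝ) ≤ h / m), abs_of_nonneg he0.le]
    have h2 : ‖x 0‖ ≤ Mx := hMx 0 h0T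
    have h3 : ‖p 0‖ ≤ Mp := hMp 0 h0T
    have h4 : (h / m) * (e * ‖p 0‖) ≤ (T / m) * Mp := by
      have h3 : ‖p 0‖ ≤ Mp := hMp 0 h0T
      have he' : e * ‖p 0‖ ≤ Mp := by nlinarith [norm_nonneg (p 0)]
      have hdm : h / m ≤ T / m := by gcongr
      exact mul_le_mul hdm he' (mul_nonneg he0.le (norm_nonneg _))
        (div_nonneg hT.le hm.le)
    rw [hR]; nlinarith
  have hgd : ‖gradient f xhalf - gradient f (x 0)‖ ≤ Lf * (Mp / m) * h := by
    refine le_trans (hLf _ hxhalfK _ (hxK 0 h0T)) ?_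
    have : ‖xhalf - x 0‖ = (h / m) * (e * ‖p 0‖) := by
      rw [hxh, add_sub_cancel_left, norm_smul, norm_smul, Real.norm_eq_abs,
        Real.norm_eq_abs, abs_of_nonneg (by positivity : (0:ℝ) ≤ h / m),
        abs_of_nonneg he0.le]
    rw [this]
    have h3 : ‖p 0‖ ≤ Mp := hMp 0 h0T
    have h4 : e * ‖p 0‖ ≤ Mp := by nlinarith [norm_nonneg (p 0)]
    have hdm : 0 ≤ h / m := by positivity
    calc Lf * ((h / m) * (e * ‖p 0‖)) ≤ Lf * ((h / m) * Mp) :=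
          mul_le_mul_of_nonneg_left (mul_le_mul_of_nonneg_left h4 hdm) hLf0
      _ = Lf * (Mp / m) * h := by ring
  -- p-part estimate
  set gh := gradient f xhalf with hghd
  set g0 := gradient f (x 0) with hg0d
  set Ep := p h - p 0 - h • (-(g0) - γ • p 0) with hEp
  have hph : p h = p 0 + h • (-(g0) - γ • p 0) + Ep := by rw [hEp]; abel
  have hidp : (e • p 0 - h • gh) - p h
      = (e - 1 + γ * h) • p 0 - h • (gh - g0) - Ep := by
    rw [hph]; module
  have hPnorm : ‖(e • p 0 - h • gh) - p h‖ ≤ Cp * h ^ 2 := by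
    rw [hidp]
    have h3 : ‖p 0‖ ≤ Mp := hMp 0 h0T
    calc ‖(e - 1 + γ * h) • p 0 - h • (gh - g0) - Ep‖
        ≤ ‖(e - 1 + γ * h) • p 0‖ + ‖h • (gh - g0)‖ + ‖Ep‖ :=
          le_trans (norm_sub_le _ _) (by gcongr; exact norm_sub_le _ _)
      _ = |e - 1 + γ * h| * ‖p 0‖ + h * ‖gh - g0‖ + ‖Ep‖ := by
          rw [norm_smul, norm_smul, Real.norm_eq_abs, Real.norm_eq_abs,
            abs_of_nonneg hh0.le]
      _ ≤ (γ ^ 2 * h ^ 2) * Mp + h * (Lf * (Mp / m) * h) + Kp * h ^ 2 :=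
          add_le_add (add_le_add
            (mul_le_mul heT h3 (norm_nonneg _) (by positivity))
            (mul_le_mul_of_nonneg_left hgd hh0.le)) hTp
      _ = Cp * h ^ 2 := by rw [hCp]; ring
  -- x-part estimate
  set Ex := x h - x 0 - h • ((1 / m) • p 0) with hEx
  have hxheq : x h = x 0 + (h / m) • p 0 + Ex := by
    rw [hEx]
    have : h • ((1 / m) • p 0) = (h / m) • p 0 := by
      rw [smul_smul]; congr 1; ring
    rw [this]; abel
  have hidx : (x 0 + (h / m) • (e • p 0 - h • gh)) - x h
      = (h / m) • ((e • p 0 - h • gh) - p h) + (h / m) • (p h - p 0) - Ex := by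
    rw [hxheq, hph]; module
  have hXnorm : ‖(x 0 + (h / m) • (e • p 0 - h • gh)) - x h‖ ≤ Cx * h ^ 2 := by
    rw [hidx]
    have hphb : ‖p h - p 0‖ ≤ M' * h := hpLip h ⟨hh0.le, hhT⟩
    have hdm : (0:ℝ) ≤ h / m := by positivity
    calc ‖(h / m) • ((e • p 0 - h • gh) - p h) + (h / m) • (p h - p 0) - Ex‖
        ≤ ‖(h / m) • ((e • p 0 - h • gh) - p h)‖ + ‖(h / m) • (p h - p 0)‖ + ‖Ex‖ :=
          le_trans (norm_sub_le _ _) (by gcongr; exact norm_add_le _ _)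
      _ = (h / m) * ‖(e • p 0 - h • gh) - p h‖ + (h / m) * ‖p h - p 0‖ + ‖Ex‖ := by
          rw [norm_smul, norm_smul, Real.norm_eq_abs, abs_of_nonneg hdm]
      _ ≤ (h / m) * (Cp * h ^ 2) + (h / m) * (M' * h) + (M' / m) * h ^ 2 := by
          gcongr
      _ ≤ Cx * h ^ 2 := by
          have h1 : (h / m) * (Cp * h ^ 2) ≤ (Cp / m) * h ^ 2 := by
            have heq : (h / m) * (Cp * h ^ 2) = (Cp / m) * h ^ 2 * h := by ring
            rw [heq]
            nlinarith [mul_nonneg (div_nonneg hCp0 hm.le) (sq_nonneg h)]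
          have h2 : (h / m) * (M' * h) = (M' / m) * h ^ 2 := by ring
          have h3 : Cx * h ^ 2 = (Cp / m) * h ^ 2 + (M' / m) * h ^ 2 + (M' / m) * h ^ 2 := by
            rw [hCx]; ring
          rw [h2, h3]
          linarith
  -- combine
  calc ‖(x 0 + (h / m) • (e • p 0 - h • gh)) - x h‖ + ‖(e • p 0 - h • gh) - p h‖
      ≤ Cx * h ^ 2 + Cp * h ^ 2 := add_le_add hXnorm hPnorm
    _ ≤ (Cx + Cp + 1) * h ^ 2 := by nlinarith [sq_nonneg h]
end

section
/- Let f : ℝⁿ → ℝ be twice continuously differentiable, m > 0, γ ≥ 0, h > 0, and define the shadow Hamiltonian H̃(x, p) = ‖p‖²/(2m) + f(x) − (hγ/(4m)) ‖p‖² − (h/(2m)) ⟨∇f(x), p⟩ + (hγ/2) f(x). Then for all (x, p) ∈ ℝⁿ × ℝⁿ the conformal Hamiltonian vector field of H̃ with damping γ coincides with the modified heavy-ball vector field: ∇_p H̃(x, p) = p/m − (hγ/(2m)) p − (h/(2m)) ∇f(x), and −∇_x H̃(x, p) − γ p = −∇f(x) − γ p − (hγ/2) ∇f(x) + (h/(2m))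 ∇²f(x) p. In particular, the modified (shadow) system of the classical momentum method, ẋ = p/m − (hγ/(2m)) p − (h/(2m)) ∇f(x), ṗ = −∇f(x) − γp − (hγ/2) ∇f(x) + (h/(2m)) ∇²f(x) p, is itself a conformal Hamiltonian system with Hamiltonian H̃ and damping γ. -/
open scoped InnerProductSpace

open InnerProductSpace

/-- the modified (shadow) heavy-ball system is a conformal
Hamiltonian system with shadow Hamiltonian
`H̃(x,p) = ‖p‖²/(2m) + f(x) − (hγ/(4m))‖p‖² − (h/(2m))⟨∇f(x), p⟫ + (hγ/2) f(x)`
and damping `γ`: the `p`-gradient of `H̃` gives the modified `ẋ` field and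
`−∇ₓH̃ − γp` gives the modified `ṗ` field. -/
theorem shadow_hamiltonian_heavyBall
    {n : ℕ} (f : EuclideanSpace ℝ (Fin n) → ℝ) (hf : ContDiff ℝ 2 f)
    (m γ h : ℝ) (hm : 0 < m) (hγ : 0 ≤ γ) (hh : 0 < h)
    (H : EuclideanSpace ℝ (Fin n) → EuclideanSpace ℝ (Fin n) → ℝ)
    (hH : ∀ x p, H x p = ‖p‖ ^ 2 / (2 * m) + f x - (h * γ / (4 * m)) * ‖p‖ ^ 2
      - (h / (2 * m)) * ⟪gradient f x, p⟫_ℝ + (h * γ / 2) * f x) :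
    ∀ x p : EuclideanSpace ℝ (Fin n),
      gradient (fun q => H x q) p
        = (1 / m) • p - (h * γ / (2 * m)) • p - (h / (2 * m)) • gradient f x
      ∧ -(gradient (fun y => H y p) x) - γ • p
        = -(gradient f x) - γ • p - (h * γ / 2) • gradient f x
          + (h / (2 * m)) • fderiv ℝ (gradient f) x p := by
  intro x p
  have hfd : Differentiable ℝ f := hf.differentiable (by norm_num)
  have hf' : ContDiff ℝ 1 (fderiv ℝ f) := hf.fderiv_right (by norm_num)
  have hf'd : Differentiable ℝ (fderiv ℝ f) := hf'.differentiable one_ne_zero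
  -- inner product with gradient equals fderiv applied
  have hinner : ∀ (y v : (EuclideanSpace ℝ (Fin n))), ⟪gradient f y, v⟫_ℝ = fderiv ℝ f y v := by
    intro y v
    rw [gradient, toDual_symm_apply]
  constructor
  · -- gradient in p
    have hsq : HasFDerivAt (fun q : EuclideanSpace ℝ (Fin n) => ⟪q, q⟫_ℝ)
        ((fderivInnerCLM ℝ (p, p)).comp ((ContinuousLinearMap.id ℝ (EuclideanSpace ℝ (Fin n))).prod
          (ContinuousLinearMap.id ℝ (EuclideanSpace ℝ (Fin n))))) p :=
      (hasFDerivAt_id p).inner ℝ (hasFDerivAt_id p)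
    have hin : HasFDerivAt (fun q : EuclideanSpace ℝ (Fin n) => ⟪gradient f x, q⟫_ℝ)
        (innerSL ℝ (gradient f x)) p := (innerSL ℝ (gradient f x)).hasFDerivAt
    have htot := (((hsq.const_mul (1 / (2 * m))).add_const (f x)).sub
        (hsq.const_mul (h * γ / (4 * m)))).sub (hin.const_mul (h / (2 * m)))
        |>.add_const (h * γ / 2 * f x)
    have hgoal : HasGradientAt (fun q : EuclideanSpace ℝ (Fin n) => H x q)
        ((1 / m) • p - (h * γ / (2 * m)) • p - (h / (2 * m)) • gradient f x) p := by
      rw [hasGradientAt_iff_hasFDerivAt]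
      have heqf : (fun q : EuclideanSpace ℝ (Fin n) => H x q) = fun q : EuclideanSpace ℝ (Fin n) =>
          (1 / (2 * m)) * ⟪q, q⟫_ℝ + f x - (h * γ / (4 * m)) * ⟪q, q⟫_ℝ
            - (h / (2 * m)) * ⟪gradient f x, q⟫_ℝ + (h * γ / 2 * f x) := by
        funext q
        rw [hH, real_inner_self_eq_norm_sq]
        ring
      rw [heqf]
      refine htot.congr_fderiv (Eq.symm ?_)
      ext v
      simp only [toDual_apply_apply, ContinuousLinearMap.coe_sub', ContinuousLinearMap.coe_smul',
        Pi.sub_apply, Pi.smul_apply, ContinuousLinearMap.coe_comp', Function.comp_apply,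
        ContinuousLinearMap.prod_apply, ContinuousLinearMap.coe_id', id_eq,
        fderivInnerCLM_apply, innerSL_apply_apply, ContinuousLinearMap.add_apply,
        ContinuousLinearMap.coe_smul]
      rw [inner_sub_left, inner_sub_left, inner_smul_left, inner_smul_left, inner_smul_left]
      simp only [RCLike.inner_apply, conj_trivial, smul_eq_mul]
      rw [real_inner_comm v p]
      field_simp
      ring
    exact hgoal.gradient
  · -- gradient in x
    set B := fderiv ℝ (fderiv ℝ f) x with hB
    have hsymm : ∀ v w, B v w = B w v := fun v w =>
      (hf.contDiffAt.isSymmSndFDerivAt (by simp [minSmoothness_of_isRCLikeNormedField])) v w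
    have hBfd : HasFDerivAt (fderiv ℝ f) B x := (hf'd x).hasFDerivAt
    have happ : HasFDerivAt (fun y : EuclideanSpace ℝ (Fin n) => fderiv ℝ f y p)
        ((fderiv ℝ f x).comp (0 : EuclideanSpace ℝ (Fin n) →L[ℝ] (EuclideanSpace ℝ (Fin n))) + B.flip p) x := by
      simpa using hBfd.clm_apply (hasFDerivAt_const p x)
    have hfx : HasFDerivAt f (fderiv ℝ f x) x := (hfd x).hasFDerivAt
    have htot := ((((hasFDerivAt_const (‖p‖ ^ 2 / (2 * m)) x).add hfx).sub
        (hasFDerivAt_const ((h * γ / (4 * m)) * ‖p‖ ^ 2) x)).sub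
        (happ.const_mul (h / (2 * m)))).add (hfx.const_mul (h * γ / 2))
    -- gradient of y ↦ gradient f y is toDual.symm ∘ B
    have hgradf : fderiv ℝ (gradient f) x p = (toDual ℝ (EuclideanSpace ℝ (Fin n))).symm (B p) := by
      have : gradient f = (⇑(toDual ℝ (EuclideanSpace ℝ (Fin n))).symm) ∘ fderiv ℝ f := rfl
      rw [this, LinearIsometryEquiv.comp_fderiv]
      rfl
    have hgoal : HasGradientAt (fun y : EuclideanSpace ℝ (Fin n) => H y p)
        (gradient f x + (h * γ / 2) • gradient f x
          - (h / (2 * m)) • (toDual ℝ (EuclideanSpace ℝ (Fin n))).symm (B p)) x := by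
      rw [hasGradientAt_iff_hasFDerivAt]
      have heqf : (fun y : EuclideanSpace ℝ (Fin n) => H y p) = fun y : EuclideanSpace ℝ (Fin n) =>
          ‖p‖ ^ 2 / (2 * m) + f y - (h * γ / (4 * m)) * ‖p‖ ^ 2
            - (h / (2 * m)) * (fderiv ℝ f y p) + (h * γ / 2) * f y := by
        funext y
        rw [hH, hinner]
      rw [heqf]
      refine htot.congr_fderiv (Eq.symm ?_)
      ext v
      simp only [toDual_apply_apply, ContinuousLinearMap.add_apply, ContinuousLinearMap.sub_apply,
        ContinuousLinearMap.coe_smul', Pi.smul_apply, ContinuousLinearMap.zero_apply,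
        ContinuousLinearMap.comp_apply, ContinuousLinearMap.map_zero,
        ContinuousLinearMap.flip_apply, smul_eq_mul]
      rw [inner_sub_left, inner_add_left, inner_smul_left, inner_smul_left]
      simp only [RCLike.inner_apply, conj_trivial]
      rw [hinner, toDual_symm_apply, hsymm p v]
      ring
    rw [hgoal.gradient, hgradf]
    abel_nf
end

section
/- Let f : ℝⁿ → ℝ be three times continuously differentiable with bounded second and third derivatives, m > 0, γ ≥ 0, and fix (x₀, p₀) ∈ ℝⁿ × ℝⁿ. For each h > 0, let (x_h, p_h) : [0, h] → ℝⁿ × ℝⁿ be the solution, with (x_h(0), p_h(0)) = (x₀, p₀), of the modified (shadow) heavy-ball system ẋ = p/m − (hγ/(2m)) p − (h/(2m)) ∇f(x), ṗ = −∇f(x) − γ p − (hγ/2) ∇f(x) + (h/(2m)) ∇²f(x) p. Define one classical-momentum step P_h = e^{−γh} p₀ − h ∇f(x₀), X_h = x₀ + (h/m) P_h. Then the heavy-ball method is a second-order integrator for this shadow system: there exist constants C > 0 and ε > 0 such that for all h ∈ (0, ε], ‖X_h − x_h(h)‖ + ‖P_h − p_h(h)‖ ≤ C h³. -/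
open InnerProductSpace Set

variable {N : ℕ} {f : EuclideanSpace ℝ (Fin N) → ℝ}

lemma grad_contDiff (hf : ContDiff ℝ 3 f) : ContDiff ℝ 2 (gradient f) := by
  have : gradient f = fun y => (toDual ℝ (EuclideanSpace ℝ (Fin N))).symm (fderiv ℝ f y) := rfl
  rw [this]
  exact ((toDual ℝ (EuclideanSpace ℝ (Fin N))).symm.contDiff).comp (hf.fderiv_right (by norm_num))

lemma norm_iteratedFDeriv_grad (y : EuclideanSpace ℝ (Fin N)) (k : ℕ) :
    ‖iteratedFDeriv ℝ k (gradient f) y‖ = ‖iteratedFDeriv ℝ (k + 1) f y‖ := by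
  have h2 : gradient f = (⇑(toDual ℝ (EuclideanSpace ℝ (Fin N))).symm ∘ fderiv ℝ f) := rfl
  rw [h2, LinearIsometryEquiv.norm_iteratedFDeriv_comp_left, norm_iteratedFDeriv_fderiv]

lemma grad_hasFDerivAt_s14 (hf : ContDiff ℝ 3 f) (y : EuclideanSpace ℝ (Fin N)) :
    HasFDerivAt (gradient f) (fderiv ℝ (gradient f) y) y :=
  (((grad_contDiff hf).differentiable (by norm_num)) y).hasFDerivAt

lemma norm_fderiv_grad (y : EuclideanSpace ℝ (Fin N)) :
    ‖fderiv ℝ (gradient f) y‖ = ‖iteratedFDeriv ℝ 2 f y‖ := by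
  have h1 : ‖fderiv ℝ (gradient f) y‖ = ‖iteratedFDeriv ℝ 0 (fderiv ℝ (gradient f)) y‖ := by
    rw [norm_iteratedFDeriv_zero]
  rw [h1, norm_iteratedFDeriv_fderiv, norm_iteratedFDeriv_grad]

lemma grad_lip (hf : ContDiff ℝ 3 f) {B : ℝ} (hB : ∀ y, ‖iteratedFDeriv ℝ 2 f y‖ ≤ B)
    (a b : EuclideanSpace ℝ (Fin N)) : ‖gradient f a - gradient f b‖ ≤ B * ‖a - b‖ := by
  apply convex_univ.norm_image_sub_le_of_norm_fderiv_le
    (fun y _ => ((grad_contDiff hf).differentiable (by norm_num)) y)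
    (fun y _ => by rw [norm_fderiv_grad]; exact hB y) trivial trivial

lemma hess_hasFDerivAt (hf : ContDiff ℝ 3 f) (y : EuclideanSpace ℝ (Fin N)) :
    HasFDerivAt (fun z => fderiv ℝ (gradient f) z)
      (fderiv ℝ (fun z => fderiv ℝ (gradient f) z) y) y :=
  ((((grad_contDiff hf).fderiv_right (m := 1) (by norm_num)).differentiable (by norm_num)) y).hasFDerivAt

lemma hess_lip (hf : ContDiff ℝ 3 f) {B : ℝ} (hB : ∀ y, ‖iteratedFDeriv ℝ 3 f y‖ ≤ B)
    (a b : EuclideanSpace ℝ (Fin N)) :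
    ‖fderiv ℝ (gradient f) a - fderiv ℝ (gradient f) b‖ ≤ B * ‖a - b‖ := by
  apply convex_univ.norm_image_sub_le_of_norm_hasFDerivWithin_le
    (fun y _ => (hess_hasFDerivAt hf y).hasFDerivWithinAt)
    (fun y _ => ?_) trivial trivial
  have h1 : ‖fderiv ℝ (fun z => fderiv ℝ (gradient f) z) y‖
      = ‖iteratedFDeriv ℝ 1 (fderiv ℝ (gradient f)) y‖ := by
    rw [← norm_iteratedFDeriv_fderiv, norm_iteratedFDeriv_zero]
  rw [h1, norm_iteratedFDeriv_fderiv, norm_iteratedFDeriv_grad]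
  exact hB y

lemma grad_taylor (hf : ContDiff ℝ 3 f) {B : ℝ} (hB : ∀ y, ‖iteratedFDeriv ℝ 3 f y‖ ≤ B)
    (a b : EuclideanSpace ℝ (Fin N)) :
    ‖gradient f a - gradient f b - fderiv ℝ (gradient f) b (a - b)‖ ≤ B * ‖a - b‖ ^ 2 := by
  set φ := fun y => gradient f y - fderiv ℝ (gradient f) b y with hφ
  have hB0 : 0 ≤ B := le_trans (norm_nonneg _) (hB b)
  have key : ∀ y ∈ Metric.closedBall b ‖a - b‖,
      HasFDerivWithinAt φ (fderiv ℝ (gradient f) y - fderiv ℝ (gradient f) b)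
        (Metric.closedBall b ‖a - b‖) y := fun y _ =>
    ((grad_hasFDerivAt_s14 hf y).sub ((fderiv ℝ (gradient f) b).hasFDerivAt)).hasFDerivWithinAt
  have bound : ∀ y ∈ Metric.closedBall b ‖a - b‖,
      ‖fderiv ℝ (gradient f) y - fderiv ℝ (gradient f) b‖ ≤ B * ‖a - b‖ := fun y hy =>
    le_trans (hess_lip hf hB y b) (by
      have h1 : ‖y - b‖ ≤ ‖a - b‖ := by
        have := Metric.mem_closedBall.1 hy
        simpa [dist_eq_norm] using this
      nlinarith [norm_nonneg (y - b)])
  have hbmem : b ∈ Metric.closedBall b ‖a - b‖ := Metric.mem_closedBall_self (norm_nonneg _)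
  have hamem : a ∈ Metric.closedBall b ‖a - b‖ := by
    simp [Metric.mem_closedBall, dist_eq_norm]
  have h2 := (convex_closedBall b ‖a - b‖).norm_image_sub_le_of_norm_hasFDerivWithin_le
    key bound hbmem hamem
  have h3 : φ a - φ b = gradient f a - gradient f b - fderiv ℝ (gradient f) b (a - b) := by
    simp only [hφ, map_sub]; abel
  calc ‖gradient f a - gradient f b - fderiv ℝ (gradient f) b (a - b)‖
      = ‖φ a - φ b‖ := by rw [h3]
    _ ≤ B * ‖a - b‖ * ‖a - b‖ := h2
    _ = B * ‖a - b‖ ^ 2 := by ring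

lemma exp_sub_one_le_mul {u : ℝ} (hu : 0 ≤ u) : Real.exp u - 1 ≤ u * Real.exp u := by
  have h1 : 1 + (-u) ≤ Real.exp (-u) := by linarith [Real.add_one_le_exp (-u)]
  have h2 : Real.exp (-u) * Real.exp u = 1 := by rw [← Real.exp_add]; simp
  have h3 := mul_le_mul_of_nonneg_right h1 (Real.exp_pos u).le
  nlinarith

set_option maxHeartbeats 2000000 in
/-- the heavy-ball (classical momentum) method is a second-order
integrator for its modified (shadow) system
`ẋ = p/m − (hγ/(2m)) p − (h/(2m)) ∇f(x)`,
`ṗ = −∇f(x) − γp − (hγ/2) ∇f(x) + (h/(2m)) ∇²f(x) p`: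
the one-step error from a common initial condition is `O(h³)`. -/
theorem heavyBall_second_order_for_shadow_system
    {n : ℕ} (f : EuclideanSpace ℝ (Fin n) → ℝ) (hf : ContDiff ℝ 3 f)
    (B : ℝ)
    (hB : ∀ y, ‖iteratedFDeriv ℝ 2 f y‖ ≤ B ∧ ‖iteratedFDeriv ℝ 3 f y‖ ≤ B)
    (m γ : ℝ) (hm : 0 < m) (hγ : 0 ≤ γ)
    (x₀ p₀ : EuclideanSpace ℝ (Fin n))
    (x p : ℝ → ℝ → EuclideanSpace ℝ (Fin n))
    (hinit : ∀ h > (0 : ℝ), x h 0 = x₀ ∧ p h 0 = p₀)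
    (hsol : ∀ h > (0 : ℝ), ∀ t ∈ Set.Icc (0 : ℝ) h,
      HasDerivWithinAt (x h)
        ((1 / m) • p h t - (h * γ / (2 * m)) • p h t - (h / (2 * m)) • gradient f (x h t))
        (Set.Icc 0 h) t
      ∧ HasDerivWithinAt (p h)
        (-(gradient f (x h t)) - γ • p h t - (h * γ / 2) • gradient f (x h t)
          + (h / (2 * m)) • fderiv ℝ (gradient f) (x h t) (p h t))
        (Set.Icc 0 h) t) :
    ∃ C > 0, ∃ ε > (0 : ℝ), ∀ h ∈ Set.Ioc (0 : ℝ) ε,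
      ‖(x₀ + (h / m) • (Real.exp (-γ * h) • p₀ - h • gradient f x₀)) - x h h‖
        + ‖(Real.exp (-γ * h) • p₀ - h • gradient f x₀) - p h h‖
        ≤ C * h ^ 3 := by
  have hB2 : ∀ y, ‖iteratedFDeriv ℝ 2 f y‖ ≤ B := fun y => (hB y).1
  have hB3 : ∀ y, ‖iteratedFDeriv ℝ 3 f y‖ ≤ B := fun y => (hB y).2
  have hB0 : 0 ≤ B := le_trans (norm_nonneg _) (hB2 x₀)
  have hHle : ∀ y, ‖fderiv ℝ (gradient f) y‖ ≤ B := fun y => by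
    rw [norm_fderiv_grad]; exact hB2 y
  have hg₀ : gradient f x₀ = gradient f x₀ := rfl
  obtain ⟨G, hGdef⟩ : ∃ G : ℝ, G = ‖gradient f x₀‖ := ⟨_, rfl⟩
  obtain ⟨Pn, hPndef⟩ : ∃ Pn : ℝ, Pn = ‖p₀‖ := ⟨_, rfl⟩
  have hG0 : 0 ≤ G := hGdef ▸ norm_nonneg _
  have hPn0 : 0 ≤ Pn := hPndef ▸ norm_nonneg _
  have hm2 : (0:ℝ) < 2 * m := by linarith
  have him : (0:ℝ) ≤ 1 / m := by positivity
  have hi2m : (0:ℝ) ≤ 1 / (2 * m) := by positivity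
  have hig : (0:ℝ) ≤ γ / (2 * m) := div_nonneg hγ hm2.le
  have hiB : (0:ℝ) ≤ B / (2 * m) := div_nonneg hB0 hm2.le
  -- constants
  obtain ⟨a₀, ha₀def⟩ : ∃ a₀ : ℝ, a₀ = ((1/m + γ/(2*m)) * Pn + (1/(2*m)) * G)
      + ((1 + γ/2) * G + γ * Pn + (B/(2*m)) * Pn) + 1 := ⟨_, rfl⟩
  obtain ⟨b₀, hb₀def⟩ : ∃ b₀ : ℝ, b₀ = ((1/m + γ/(2*m)) + B/(2*m))
      + ((1 + γ/2) * B + γ + B/(2*m)) + 1 := ⟨_, rfl⟩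
  have ha₀1 : 1 ≤ a₀ := by
    have e1 : 0 ≤ (1/m + γ/(2*m)) * Pn := mul_nonneg (by linarith) hPn0
    have e2 : 0 ≤ (1/(2*m)) * G := mul_nonneg hi2m hG0
    have e3 : 0 ≤ (1 + γ/2) * G := mul_nonneg (by linarith) hG0
    have e4 : 0 ≤ γ * Pn := mul_nonneg hγ hPn0
    have e5 : 0 ≤ (B/(2*m)) * Pn := mul_nonneg hiB hPn0
    rw [ha₀def]; linarith
  have ha₀pos : (0:ℝ) < a₀ := by linarith
  have hb₀1 : 1 ≤ b₀ := by
    have e1 : 0 ≤ (1 + γ/2) * B := mul_nonneg (by linarith) hB0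
    rw [hb₀def]; linarith
  have hb₀pos : (0:ℝ) < b₀ := by linarith
  obtain ⟨C₁, hC₁def⟩ : ∃ C₁ : ℝ, C₁ = a₀ * Real.exp b₀ := ⟨_, rfl⟩
  have hC₁pos : 0 < C₁ := hC₁def ▸ mul_pos ha₀pos (Real.exp_pos _)
  obtain ⟨C₂, hC₂def⟩ : ∃ C₂ : ℝ, C₂ = (B*C₁ + γ*C₁ + (γ/2)*(G + B*C₁) + (B/(2*m))*(Pn + C₁))
      + (C₁/m + (γ/(2*m))*(Pn + C₁) + (1/(2*m))*(G + B*C₁)) + 1 := ⟨_, rfl⟩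
  have hBC₁ : 0 ≤ B * C₁ := mul_nonneg hB0 hC₁pos.le
  have hγC₁ : 0 ≤ γ * C₁ := mul_nonneg hγ hC₁pos.le
  have hGB : 0 ≤ G + B*C₁ := by linarith
  have hPC : 0 ≤ Pn + C₁ := by linarith
  have hC₂pos : 0 < C₂ := by
    have e1 : 0 ≤ (γ/2)*(G + B*C₁) := mul_nonneg (by linarith) hGB
    have e2 : 0 ≤ (B/(2*m))*(Pn + C₁) := mul_nonneg hiB hPC
    have e3 : 0 ≤ C₁/m := div_nonneg hC₁pos.le hm.le
    have e4 : 0 ≤ (γ/(2*m))*(Pn + C₁) := mul_nonneg hig hPC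
    have e5 : 0 ≤ (1/(2*m))*(G + B*C₁) := mul_nonneg hi2m hGB
    rw [hC₂def]; linarith
  obtain ⟨C₃, hC₃def⟩ : ∃ C₃ : ℝ,
      C₃ = (B*C₁^2 + B*C₂ + γ*C₂ + (γ*B*C₁)/2 + (B*C₁*(Pn + C₁ + 1))/(2*m) + 1)
      + (C₂/m + (γ*C₁)/(2*m) + (B*C₁)/(2*m) + 1) := ⟨_, rfl⟩
  have hC₃pos : 0 < C₃ := by
    have h1 : 0 ≤ B*C₁^2 := mul_nonneg hB0 (sq_nonneg _)
    have h2 : 0 ≤ B*C₂ := mul_nonneg hB0 hC₂pos.le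
    have h3 : 0 ≤ γ*C₂ := mul_nonneg hγ hC₂pos.le
    have h4 : 0 ≤ (γ*B*C₁)/2 :=
      div_nonneg (mul_nonneg (mul_nonneg hγ hB0) hC₁pos.le) (by norm_num)
    have h5 : 0 ≤ (B*C₁*(Pn + C₁ + 1))/(2*m) :=
      div_nonneg (mul_nonneg hBC₁ (by linarith)) hm2.le
    have h6 : 0 ≤ C₂/m := div_nonneg hC₂pos.le hm.le
    have h7 : 0 ≤ (γ*C₁)/(2*m) := div_nonneg hγC₁ hm2.le
    have h8 : 0 ≤ (B*C₁)/(2*m) := div_nonneg hBC₁ hm2.le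
    rw [hC₃def]; linarith
  obtain ⟨C, hCdef⟩ : ∃ C : ℝ, C = 2*C₃ + γ^3*Pn + (γ^2*Pn)/m + 1 := ⟨_, rfl⟩
  have hCpos : 0 < C := by
    have h1 : 0 ≤ γ^3*Pn := mul_nonneg (by positivity) hPn0
    have h2 : 0 ≤ (γ^2*Pn)/m := div_nonneg (mul_nonneg (by positivity) hPn0) hm.le
    rw [hCdef]; linarith
  have hγ1pos : (0:ℝ) < γ + 1 := by linarith
  refine ⟨C, hCpos, min 1 (1/(γ+1)), lt_min one_pos (one_div_pos.2 hγ1pos), ?_⟩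
  rintro h ⟨hh, hhε⟩
  have hh1 : h ≤ 1 := le_trans hhε (min_le_left _ _)
  have hγh : γ * h ≤ 1 := by
    have h2 : h ≤ 1/(γ+1) := le_trans hhε (min_le_right _ _)
    have h3 : γ * h ≤ γ * (1/(γ+1)) := mul_le_mul_of_nonneg_left h2 hγ
    have h4 : γ * (1/(γ+1)) ≤ 1 := by
      rw [mul_one_div, div_le_one hγ1pos]; linarith
    linarith
  obtain ⟨hx0, hp0⟩ := hinit h hh
  have hx' : ∀ t ∈ Icc (0:ℝ) h, HasDerivWithinAt (x h)
      ((1 / m) • p h t - (h * γ / (2 * m)) • p h t - (h / (2 * m)) • gradient f (x h t))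
      (Icc 0 h) t := fun t ht => (hsol h hh t ht).1
  have hp' : ∀ t ∈ Icc (0:ℝ) h, HasDerivWithinAt (p h)
      (-(gradient f (x h t)) - γ • p h t - (h * γ / 2) • gradient f (x h t)
        + (h / (2 * m)) • fderiv ℝ (gradient f) (x h t) (p h t))
      (Icc 0 h) t := fun t ht => (hsol h hh t ht).2
  have hhγ2m : 0 ≤ h * γ / (2*m) := div_nonneg (mul_nonneg hh.le hγ) hm2.le
  have hh2m : 0 ≤ h / (2*m) := div_nonneg hh.le hm2.le
  have hhγ2 : 0 ≤ h * γ / 2 := div_nonneg (mul_nonneg hh.le hγ) (by norm_num)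
  -- Step A : a priori bound
  have hA : ∀ t ∈ Icc (0:ℝ) h, ‖x h t - x₀‖ ≤ C₁ * t ∧ ‖p h t - p₀‖ ≤ C₁ * t := by
    have hcont : ContinuousOn (fun t => (x h t - x₀, p h t - p₀)) (Icc (0:ℝ) h) :=
      fun t ht => (((hx' t ht).sub_const x₀).prodMk ((hp' t ht).sub_const p₀)).continuousWithinAt
    have hderiv : ∀ t ∈ Ico (0:ℝ) h,
        HasDerivWithinAt (fun t => (x h t - x₀, p h t - p₀))
          ((1 / m) • p h t - (h * γ / (2 * m)) • p h t - (h / (2 * m)) • gradient f (x h t),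
           -(gradient f (x h t)) - γ • p h t - (h * γ / 2) • gradient f (x h t)
             + (h / (2 * m)) • fderiv ℝ (gradient f) (x h t) (p h t)) (Ici t) t := by
      intro t ht
      have hmem : Icc (0:ℝ) h ∈ nhdsWithin t (Ici t) := by
        rw [mem_nhdsWithin]
        exact ⟨Iio h, isOpen_Iio, ht.2, fun y hy => ⟨le_trans ht.1 hy.2, le_of_lt hy.1⟩⟩
      exact (((hx' t (Ico_subset_Icc_self ht)).sub_const x₀).prodMk
        ((hp' t (Ico_subset_Icc_self ht)).sub_const p₀)).mono_of_mem_nhdsWithin hmem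
    have hbound : ∀ t ∈ Ico (0:ℝ) h,
        ‖((1 / m) • p h t - (h * γ / (2 * m)) • p h t - (h / (2 * m)) • gradient f (x h t),
           -(gradient f (x h t)) - γ • p h t - (h * γ / 2) • gradient f (x h t)
             + (h / (2 * m)) • fderiv ℝ (gradient f) (x h t) (p h t))‖
          ≤ b₀ * ‖(x h t - x₀, p h t - p₀)‖ + a₀ := by
      intro t _
      have hq0 : 0 ≤ ‖(x h t - x₀, p h t - p₀)‖ := norm_nonneg _
      have hx1 : ‖x h t - x₀‖ ≤ ‖(x h t - x₀, p h t - p₀)‖ := norm_fst_le (x h t - x₀, p h t - p₀)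
      have hp1 : ‖p h t - p₀‖ ≤ ‖(x h t - x₀, p h t - p₀)‖ := norm_snd_le (x h t - x₀, p h t - p₀)
      have hPt : ‖p h t‖ ≤ Pn + ‖(x h t - x₀, p h t - p₀)‖ := by
        have h1 := norm_sub_norm_le (p h t) p₀
        rw [hPndef]; linarith
      have hgt : ‖gradient f (x h t)‖ ≤ G + B * ‖(x h t - x₀, p h t - p₀)‖ := by
        have h1 := grad_lip hf hB2 (x h t) x₀
        have h2 := norm_sub_norm_le (gradient f (x h t)) (gradient f x₀)
        have h3 : B * ‖x h t - x₀‖ ≤ B * ‖(x h t - x₀, p h t - p₀)‖ :=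
          mul_le_mul_of_nonneg_left hx1 hB0
        rw [hGdef]; linarith
      have hHt : ‖fderiv ℝ (gradient f) (x h t) (p h t)‖
          ≤ B * (Pn + ‖(x h t - x₀, p h t - p₀)‖) := by
        have h1 := (fderiv ℝ (gradient f) (x h t)).le_opNorm (p h t)
        have h2 := mul_le_mul (hHle (x h t)) hPt (norm_nonneg _) hB0
        linarith
      rw [Prod.norm_def]
      apply max_le
      · have n1 : ‖(1 / m) • p h t - (h * γ / (2 * m)) • p h t
            - (h / (2 * m)) • gradient f (x h t)‖
            ≤ (1/m) * ‖p h t‖ + (h * γ / (2 * m)) * ‖p h t‖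
              + (h / (2 * m)) * ‖gradient f (x h t)‖ := by
          calc ‖(1 / m) • p h t - (h * γ / (2 * m)) • p h t
              - (h / (2 * m)) • gradient f (x h t)‖
              ≤ ‖(1 / m) • p h t - (h * γ / (2 * m)) • p h t‖
                + ‖(h / (2 * m)) • gradient f (x h t)‖ := norm_sub_le _ _
            _ ≤ ‖(1 / m) • p h t‖ + ‖(h * γ / (2 * m)) • p h t‖
                + ‖(h / (2 * m)) • gradient f (x h t)‖ := by
                have := norm_sub_le ((1 / m) • p h t) ((h * γ / (2 * m)) • p h t)
                linarith
            _ = (1/m) * ‖p h t‖ + (h * γ / (2 * m)) * ‖p h t‖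
                + (h / (2 * m)) * ‖gradient f (x h t)‖ := by
                rw [norm_smul, norm_smul, norm_smul, Real.norm_eq_abs, Real.norm_eq_abs,
                  Real.norm_eq_abs, abs_of_nonneg him, abs_of_nonneg hhγ2m, abs_of_nonneg hh2m]
        have t0 : (1/m) * ‖p h t‖ ≤ (1/m) * (Pn + ‖(x h t - x₀, p h t - p₀)‖) :=
          mul_le_mul_of_nonneg_left hPt him
        have m1 : h * γ / (2*m) ≤ γ / (2*m) := by
          apply (div_le_div_iff_of_pos_right hm2).2
          have := mul_le_mul_of_nonneg_right hh1 hγ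
          linarith
        have m2 : h / (2*m) ≤ 1 / (2*m) := (div_le_div_iff_of_pos_right hm2).2 hh1
        have t1 : (h * γ / (2*m)) * ‖p h t‖
            ≤ (γ/(2*m)) * (Pn + ‖(x h t - x₀, p h t - p₀)‖) :=
          mul_le_mul m1 hPt (norm_nonneg _) hig
        have t2 : (h / (2*m)) * ‖gradient f (x h t)‖
            ≤ (1/(2*m)) * (G + B * ‖(x h t - x₀, p h t - p₀)‖) :=
          mul_le_mul m2 hgt (norm_nonneg _) hi2m
        have final : (1/m) * (Pn + ‖(x h t - x₀, p h t - p₀)‖)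
            + (γ/(2*m)) * (Pn + ‖(x h t - x₀, p h t - p₀)‖)
            + (1/(2*m)) * (G + B * ‖(x h t - x₀, p h t - p₀)‖)
            ≤ b₀ * ‖(x h t - x₀, p h t - p₀)‖ + a₀ := by
          rw [ha₀def, hb₀def]
          have w1 : 0 ≤ ‖(x h t - x₀, p h t - p₀)‖ * (B/(2*m)) := mul_nonneg hq0 hiB
          have w2 : 0 ≤ ‖(x h t - x₀, p h t - p₀)‖ * ((1 + γ/2)*B) :=
            mul_nonneg hq0 (mul_nonneg (by linarith) hB0)
          have w3 : 0 ≤ ‖(x h t - x₀, p h t - p₀)‖ * γ := mul_nonneg hq0 hγ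
          have w4 : 0 ≤ ‖(x h t - x₀, p h t - p₀)‖ * (γ*B) :=
            mul_nonneg hq0 (mul_nonneg hγ hB0)
          have w5 : 0 ≤ ‖(x h t - x₀, p h t - p₀)‖ * B := mul_nonneg hq0 hB0
          have w6 : 0 ≤ γ * G := mul_nonneg hγ hG0
          have w7 : 0 ≤ γ * Pn := mul_nonneg hγ hPn0
          have w8 : 0 ≤ (B/(2*m)) * Pn := mul_nonneg hiB hPn0
          ring_nf
          ring_nf at w1 w2 w3 w4 w5 w6 w7 w8
          linarith [w1, w3, w4, w5, w6, w7, w8, hq0, hG0, hPn0]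
        linarith
      · have n2 : ‖-(gradient f (x h t)) - γ • p h t - (h * γ / 2) • gradient f (x h t)
             + (h / (2 * m)) • fderiv ℝ (gradient f) (x h t) (p h t)‖
            ≤ ‖gradient f (x h t)‖ + γ * ‖p h t‖ + (h * γ / 2) * ‖gradient f (x h t)‖
              + (h / (2 * m)) * ‖fderiv ℝ (gradient f) (x h t) (p h t)‖ := by
          have e1 := norm_add_le (-(gradient f (x h t)) - γ • p h t
            - (h * γ / 2) • gradient f (x h t))
            ((h / (2 * m)) • fderiv ℝ (gradient f) (x h t) (p h t))
          have e2 := norm_sub_le (-(gradient f (x h t)) - γ • p h t)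
            ((h * γ / 2) • gradient f (x h t))
          have e3 := norm_sub_le (-(gradient f (x h t))) (γ • p h t)
          rw [norm_neg] at e3
          have k1 : ‖γ • p h t‖ = γ * ‖p h t‖ := by
            rw [norm_smul, Real.norm_eq_abs, abs_of_nonneg hγ]
          have k2 : ‖(h * γ / 2) • gradient f (x h t)‖
              = (h * γ / 2) * ‖gradient f (x h t)‖ := by
            rw [norm_smul, Real.norm_eq_abs, abs_of_nonneg hhγ2]
          have k3 : ‖(h / (2 * m)) • fderiv ℝ (gradient f) (x h t) (p h t)‖
              = (h / (2 * m)) * ‖fderiv ℝ (gradient f) (x h t) (p h t)‖ := by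
            rw [norm_smul, Real.norm_eq_abs, abs_of_nonneg hh2m]
          linarith [e1, e2, e3, k1, k2, k3]
        have s2 : γ * ‖p h t‖ ≤ γ * (Pn + ‖(x h t - x₀, p h t - p₀)‖) :=
          mul_le_mul_of_nonneg_left hPt hγ
        have s3 : (h * γ / 2) * ‖gradient f (x h t)‖
            ≤ (γ/2) * (G + B * ‖(x h t - x₀, p h t - p₀)‖) := by
          apply mul_le_mul ?_ hgt (norm_nonneg _) (by linarith)
          have := mul_le_mul_of_nonneg_right hh1 hγ
          linarith
        have s4 : (h / (2*m)) * ‖fderiv ℝ (gradient f) (x h t) (p h t)‖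
            ≤ (1/(2*m)) * (B * (Pn + ‖(x h t - x₀, p h t - p₀)‖)) := by
          apply mul_le_mul ((div_le_div_iff_of_pos_right hm2).2 hh1) hHt (norm_nonneg _) hi2m
        have final : (G + B * ‖(x h t - x₀, p h t - p₀)‖)
            + γ * (Pn + ‖(x h t - x₀, p h t - p₀)‖)
            + (γ/2) * (G + B * ‖(x h t - x₀, p h t - p₀)‖)
            + (1/(2*m)) * (B * (Pn + ‖(x h t - x₀, p h t - p₀)‖))
            ≤ b₀ * ‖(x h t - x₀, p h t - p₀)‖ + a₀ := by
          rw [ha₀def, hb₀def]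
          have w1 : 0 ≤ ‖(x h t - x₀, p h t - p₀)‖ * (B/(2*m)) := mul_nonneg hq0 hiB
          have w2 : 0 ≤ ‖(x h t - x₀, p h t - p₀)‖ * (1/m) := mul_nonneg hq0 him
          have w3 : 0 ≤ ‖(x h t - x₀, p h t - p₀)‖ * (γ/(2*m)) := mul_nonneg hq0 hig
          have w4 : 0 ≤ Pn * (1/m) := mul_nonneg hPn0 him
          have w5 : 0 ≤ Pn * (γ/(2*m)) := mul_nonneg hPn0 hig
          have w6 : 0 ≤ G * (1/(2*m)) := mul_nonneg hG0 hi2m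
          ring_nf
          ring_nf at w1 w2 w3 w4 w5 w6
          linarith [w1, w2, w3, w4, w5, w6, hq0]
        linarith [hgt]
    have hz0 : ‖((x h 0 - x₀, p h 0 - p₀) : EuclideanSpace ℝ (Fin n) × EuclideanSpace ℝ (Fin n))‖
        ≤ 0 := by
      rw [hx0, hp0]; simp [Prod.norm_def]
    have hgron := norm_le_gronwallBound_of_norm_deriv_right_le hcont hderiv hz0 hbound
    intro t ht
    have hzt := hgron t ht
    have hg2 : gronwallBound 0 b₀ a₀ (t - 0) ≤ C₁ * t := by
      rw [sub_zero, gronwallBound_of_K_ne_0 hb₀pos.ne']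
      simp only [zero_mul, zero_add]
      have e1 : Real.exp (b₀*t) - 1 ≤ (b₀*t) * Real.exp (b₀*t) :=
        exp_sub_one_le_mul (mul_nonneg hb₀pos.le ht.1)
      have e2 : Real.exp (b₀*t) ≤ Real.exp b₀ := by
        apply Real.exp_le_exp.2
        have ht1' : t ≤ 1 := le_trans ht.2 hh1
        have := mul_le_mul_of_nonneg_left ht1' hb₀pos.le
        linarith
      calc a₀/b₀ * (Real.exp (b₀*t) - 1) ≤ a₀/b₀ * ((b₀*t)*Real.exp (b₀*t)) :=
            mul_le_mul_of_nonneg_left e1 (div_nonneg ha₀pos.le hb₀pos.le)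
        _ = a₀ * t * Real.exp (b₀*t) := by field_simp
        _ ≤ a₀ * t * Real.exp b₀ :=
            mul_le_mul_of_nonneg_left e2 (mul_nonneg ha₀pos.le ht.1)
        _ = C₁ * t := by rw [hC₁def]; ring
    exact ⟨le_trans (le_trans (norm_fst_le (x h t - x₀, p h t - p₀)) hzt) hg2,
      le_trans (le_trans (norm_snd_le (x h t - x₀, p h t - p₀)) hzt) hg2⟩
  have h0mem : (0:ℝ) ∈ Icc (0:ℝ) h := ⟨le_refl 0, hh.le⟩
  obtain ⟨v₁, hv₁⟩ : ∃ v, v = -(gradient f x₀) - γ • p₀ :=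
    ⟨_, rfl⟩
  -- pointwise state bounds
  have hq1 : ∀ t ∈ Icc (0:ℝ) h, ‖x h t - x₀‖ ≤ C₁ * h := fun t ht =>
    le_trans (hA t ht).1 (mul_le_mul_of_nonneg_left ht.2 hC₁pos.le)
  have hq2 : ∀ t ∈ Icc (0:ℝ) h, ‖p h t - p₀‖ ≤ C₁ * h := fun t ht =>
    le_trans (hA t ht).2 (mul_le_mul_of_nonneg_left ht.2 hC₁pos.le)
  have hC₁h : C₁ * h ≤ C₁ := by
    have := mul_le_mul_of_nonneg_left hh1 hC₁pos.le
    linarith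
  have hq3 : ∀ t ∈ Icc (0:ℝ) h, ‖gradient f (x h t) - gradient f x₀‖ ≤ B * (C₁ * h) :=
    fun t ht => le_trans (grad_lip hf hB2 _ _)
      (mul_le_mul_of_nonneg_left (hq1 t ht) hB0)
  have hq4 : ∀ t ∈ Icc (0:ℝ) h, ‖gradient f (x h t)‖ ≤ G + B * C₁ := by
    intro t ht
    have e1 := norm_sub_norm_le (gradient f (x h t)) (gradient f x₀)
    have e2 := hq3 t ht
    have e3 : B * (C₁ * h) ≤ B * C₁ := mul_le_mul_of_nonneg_left hC₁h hB0
    rw [hGdef]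
    linarith
  have hq5 : ∀ t ∈ Icc (0:ℝ) h, ‖p h t‖ ≤ Pn + C₁ := by
    intro t ht
    have e1 := norm_sub_norm_le (p h t) p₀
    have e2 := hq2 t ht
    rw [hPndef]
    linarith
  have hq6 : ∀ t ∈ Icc (0:ℝ) h,
      ‖fderiv ℝ (gradient f) (x h t) (p h t)‖ ≤ B * (Pn + C₁) := by
    intro t ht
    have e1 := (fderiv ℝ (gradient f) (x h t)).le_opNorm (p h t)
    have e2 := mul_le_mul (hHle (x h t)) (hq5 t ht) (norm_nonneg _) hB0
    linarith
  -- Step B : first-order bounds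
  have hBp : ∀ t ∈ Icc (0:ℝ) h, ‖p h t - p₀ - t • v₁‖ ≤ (C₂ * h) * t := by
    have hder : ∀ t ∈ Icc (0:ℝ) h, HasDerivWithinAt (fun s => p h s - p₀ - s • v₁)
        ((-(gradient f (x h t)) - γ • p h t - (h * γ / 2) • gradient f (x h t)
          + (h / (2 * m)) • fderiv ℝ (gradient f) (x h t) (p h t)) - v₁) (Icc 0 h) t :=
      fun t ht => by
        have h1 := ((hp' t ht).sub_const p₀).sub
          ((hasDerivWithinAt_id t (Icc (0:ℝ) h)).smul_const v₁)
        simp only [one_smul] at h1; exact h1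
    have hbd : ∀ t ∈ Icc (0:ℝ) h,
        ‖(-(gradient f (x h t)) - γ • p h t - (h * γ / 2) • gradient f (x h t)
          + (h / (2 * m)) • fderiv ℝ (gradient f) (x h t) (p h t)) - v₁‖ ≤ C₂ * h := by
      intro t ht
      have hid : (-(gradient f (x h t)) - γ • p h t - (h * γ / 2) • gradient f (x h t)
          + (h / (2 * m)) • fderiv ℝ (gradient f) (x h t) (p h t)) - v₁
          = -(gradient f (x h t) - gradient f x₀) - γ • (p h t - p₀)
            - (h * γ / 2) • gradient f (x h t)
            + (h / (2 * m)) • fderiv ℝ (gradient f) (x h t) (p h t) := by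
        rw [hv₁]; module
      rw [hid]
      have e1 := norm_add_le (-(gradient f (x h t) - gradient f x₀) - γ • (p h t - p₀)
        - (h * γ / 2) • gradient f (x h t))
        ((h / (2 * m)) • fderiv ℝ (gradient f) (x h t) (p h t))
      have e2 := norm_sub_le (-(gradient f (x h t) - gradient f x₀) - γ • (p h t - p₀))
        ((h * γ / 2) • gradient f (x h t))
      have e3 := norm_sub_le (-(gradient f (x h t) - gradient f x₀)) (γ • (p h t - p₀))
      rw [norm_neg] at e3
      have k1 : ‖γ • (p h t - p₀)‖ = γ * ‖p h t - p₀‖ := by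
        rw [norm_smul, Real.norm_eq_abs, abs_of_nonneg hγ]
      have k2 : ‖(h * γ / 2) • gradient f (x h t)‖ = (h * γ / 2) * ‖gradient f (x h t)‖ := by
        rw [norm_smul, Real.norm_eq_abs, abs_of_nonneg hhγ2]
      have k3 : ‖(h / (2 * m)) • fderiv ℝ (gradient f) (x h t) (p h t)‖
          = (h / (2 * m)) * ‖fderiv ℝ (gradient f) (x h t) (p h t)‖ := by
        rw [norm_smul, Real.norm_eq_abs, abs_of_nonneg hh2m]
      have b1 := hq3 t ht
      have b2 : γ * ‖p h t - p₀‖ ≤ γ * (C₁ * h) :=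
        mul_le_mul_of_nonneg_left (hq2 t ht) hγ
      have b3 : (h * γ / 2) * ‖gradient f (x h t)‖ ≤ (h * γ / 2) * (G + B * C₁) :=
        mul_le_mul_of_nonneg_left (hq4 t ht) hhγ2
      have b4 : (h / (2 * m)) * ‖fderiv ℝ (gradient f) (x h t) (p h t)‖
          ≤ (h / (2 * m)) * (B * (Pn + C₁)) :=
        mul_le_mul_of_nonneg_left (hq6 t ht) hh2m
      have hfin : B * (C₁ * h) + γ * (C₁ * h) + (h * γ / 2) * (G + B * C₁)
          + (h / (2 * m)) * (B * (Pn + C₁)) ≤ C₂ * h := by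
        rw [hC₂def]
        have w1 : 0 ≤ h * (C₁/m) := mul_nonneg hh.le (div_nonneg hC₁pos.le hm.le)
        have w2 : 0 ≤ h * ((γ/(2*m)) * (Pn + C₁)) :=
          mul_nonneg hh.le (mul_nonneg hig hPC)
        have w3 : 0 ≤ h * ((1/(2*m)) * (G + B*C₁)) :=
          mul_nonneg hh.le (mul_nonneg hi2m hGB)
        ring_nf
        ring_nf at w1 w2 w3
        linarith [w1, w2, w3, hh.le]
      linarith [e1, e2, e3, k1, k2, k3, b1, b2, b3, b4, hfin]
    intro t ht
    have key := Convex.norm_image_sub_le_of_norm_hasDerivWithin_le hder hbd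
      (convex_Icc (0:ℝ) h) h0mem ht
    have e0 : p h 0 - p₀ - (0:ℝ) • v₁ = 0 := by rw [hp0]; simp
    rw [e0, sub_zero, sub_zero, Real.norm_eq_abs, abs_of_nonneg ht.1] at key
    exact key
  have hBx : ∀ t ∈ Icc (0:ℝ) h, ‖x h t - x₀ - t • ((1/m) • p₀)‖ ≤ (C₂ * h) * t := by
    have hder : ∀ t ∈ Icc (0:ℝ) h, HasDerivWithinAt (fun s => x h s - x₀ - s • ((1/m) • p₀))
        (((1 / m) • p h t - (h * γ / (2 * m)) • p h t - (h / (2 * m)) • gradient f (x h t))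
          - (1/m) • p₀) (Icc 0 h) t :=
      fun t ht => by
        have h1 := ((hx' t ht).sub_const x₀).sub
          ((hasDerivWithinAt_id t (Icc (0:ℝ) h)).smul_const ((1/m) • p₀))
        simp only [one_smul] at h1; exact h1
    have hbd : ∀ t ∈ Icc (0:ℝ) h,
        ‖((1 / m) • p h t - (h * γ / (2 * m)) • p h t - (h / (2 * m)) • gradient f (x h t))
          - (1/m) • p₀‖ ≤ C₂ * h := by
      intro t ht
      have hid : ((1 / m) • p h t - (h * γ / (2 * m)) • p h t
          - (h / (2 * m)) • gradient f (x h t)) - (1/m) • p₀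
          = (1/m) • (p h t - p₀) - (h * γ / (2 * m)) • p h t
            - (h / (2 * m)) • gradient f (x h t) := by module
      rw [hid]
      have e2 := norm_sub_le ((1/m) • (p h t - p₀) - (h * γ / (2 * m)) • p h t)
        ((h / (2 * m)) • gradient f (x h t))
      have e3 := norm_sub_le ((1/m) • (p h t - p₀)) ((h * γ / (2 * m)) • p h t)
      have k1 : ‖(1/m) • (p h t - p₀)‖ = (1/m) * ‖p h t - p₀‖ := by
        rw [norm_smul, Real.norm_eq_abs, abs_of_nonneg him]
      have k2 : ‖(h * γ / (2 * m)) • p h t‖ = (h * γ / (2 * m)) * ‖p h t‖ := by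
        rw [norm_smul, Real.norm_eq_abs, abs_of_nonneg hhγ2m]
      have k3 : ‖(h / (2 * m)) • gradient f (x h t)‖
          = (h / (2 * m)) * ‖gradient f (x h t)‖ := by
        rw [norm_smul, Real.norm_eq_abs, abs_of_nonneg hh2m]
      have b1 : (1/m) * ‖p h t - p₀‖ ≤ (1/m) * (C₁ * h) :=
        mul_le_mul_of_nonneg_left (hq2 t ht) him
      have b2 : (h * γ / (2 * m)) * ‖p h t‖ ≤ (h * γ / (2 * m)) * (Pn + C₁) :=
        mul_le_mul_of_nonneg_left (hq5 t ht) hhγ2m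
      have b3 : (h / (2 * m)) * ‖gradient f (x h t)‖ ≤ (h / (2 * m)) * (G + B * C₁) :=
        mul_le_mul_of_nonneg_left (hq4 t ht) hh2m
      have hfin : (1/m) * (C₁ * h) + (h * γ / (2 * m)) * (Pn + C₁)
          + (h / (2 * m)) * (G + B * C₁) ≤ C₂ * h := by
        rw [hC₂def]
        have w1 : 0 ≤ h * (B*C₁) := mul_nonneg hh.le hBC₁
        have w2 : 0 ≤ h * (γ*C₁) := mul_nonneg hh.le hγC₁
        have w3 : 0 ≤ h * ((γ/2) * (G + B*C₁)) :=
          mul_nonneg hh.le (mul_nonneg (by linarith) hGB)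
        have w4 : 0 ≤ h * ((B/(2*m)) * (Pn + C₁)) :=
          mul_nonneg hh.le (mul_nonneg hiB hPC)
        ring_nf
        ring_nf at w1 w2 w3 w4
        linarith [w1, w2, w3, w4, hh.le]
      linarith [e2, e3, k1, k2, k3, b1, b2, b3, hfin]
    intro t ht
    have key := Convex.norm_image_sub_le_of_norm_hasDerivWithin_le hder hbd
      (convex_Icc (0:ℝ) h) h0mem ht
    have e0 : x h 0 - x₀ - (0:ℝ) • ((1/m) • p₀) = 0 := by rw [hx0]; simp
    rw [e0, sub_zero, sub_zero, Real.norm_eq_abs, abs_of_nonneg ht.1] at key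
    exact key
  -- Step C : second-order bounds
  obtain ⟨w, hw⟩ : ∃ w, w = -(gradient f x₀) - γ • p₀ - (h*γ/2) • gradient f x₀
      + (h/(2*m)) • (fderiv ℝ (gradient f) x₀ p₀) := ⟨_, rfl⟩
  obtain ⟨ap, hap⟩ : ∃ a, a = γ • gradient f x₀ + (γ^2) • p₀
      - (1/m) • (fderiv ℝ (gradient f) x₀ p₀) := ⟨_, rfl⟩
  obtain ⟨u, hu⟩ : ∃ u, u = (1/m) • p₀ - (h*γ/(2*m)) • p₀
      - (h/(2*m)) • gradient f x₀ := ⟨_, rfl⟩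
  obtain ⟨ax, hax⟩ : ∃ a, a = (1/m) • (-(gradient f x₀) - γ • p₀) := ⟨_, rfl⟩
  have hmemh : h ∈ Icc (0:ℝ) h := ⟨hh.le, le_refl h⟩
  have hCp : ‖p h h - p₀ - h • w - (h^2/2) • ap‖ ≤ (C₃ * h^2) * h := by
    have hder : ∀ t ∈ Icc (0:ℝ) h, HasDerivWithinAt
        (fun s => p h s - p₀ - s • w - (s^2/2) • ap)
        ((-(gradient f (x h t)) - γ • p h t - (h * γ / 2) • gradient f (x h t)
          + (h / (2 * m)) • fderiv ℝ (gradient f) (x h t) (p h t)) - w - t • ap)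
        (Icc 0 h) t := by
      intro t ht
      have h1 := (((hp' t ht).sub_const p₀).sub
        ((hasDerivWithinAt_id t (Icc (0:ℝ) h)).smul_const w)).sub
        (((hasDerivWithinAt_pow 2 t (s := Icc (0:ℝ) h)).div_const 2).smul_const ap)
      exact h1.congr_deriv (by module)
    have hbd : ∀ t ∈ Icc (0:ℝ) h,
        ‖(-(gradient f (x h t)) - γ • p h t - (h * γ / 2) • gradient f (x h t)
          + (h / (2 * m)) • fderiv ℝ (gradient f) (x h t) (p h t)) - w - t • ap‖
          ≤ C₃ * h^2 := by
      intro t ht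
      have hid : (-(gradient f (x h t)) - γ • p h t - (h * γ / 2) • gradient f (x h t)
          + (h / (2 * m)) • fderiv ℝ (gradient f) (x h t) (p h t)) - w - t • ap
          = -(gradient f (x h t) - gradient f x₀
              - fderiv ℝ (gradient f) x₀ (x h t - x₀))
            - (fderiv ℝ (gradient f) x₀ (x h t - x₀)
              - t • (1/m) • fderiv ℝ (gradient f) x₀ p₀)
            - γ • (p h t - p₀ - t • v₁)
            - (h*γ/2) • (gradient f (x h t) - gradient f x₀)
            + (h/(2*m)) • (fderiv ℝ (gradient f) (x h t) (p h t)
              - fderiv ℝ (gradient f) x₀ p₀) := by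
        rw [hw, hap, hv₁]; module
      rw [hid]
      -- individual bounds
      have c1 : ‖gradient f (x h t) - gradient f x₀
          - fderiv ℝ (gradient f) x₀ (x h t - x₀)‖ ≤ B * (C₁*h)^2 := by
        refine le_trans (grad_taylor hf hB3 (x h t) x₀) ?_
        have e1 : ‖x h t - x₀‖^2 ≤ (C₁*h)^2 :=
          pow_le_pow_left₀ (norm_nonneg _) (hq1 t ht) 2
        exact mul_le_mul_of_nonneg_left e1 hB0
      have c2 : ‖fderiv ℝ (gradient f) x₀ (x h t - x₀)
          - t • (1/m) • fderiv ℝ (gradient f) x₀ p₀‖ ≤ B * (C₂ * h * h) := by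
        have hEq : fderiv ℝ (gradient f) x₀ (x h t - x₀)
            - t • (1/m) • fderiv ℝ (gradient f) x₀ p₀
            = fderiv ℝ (gradient f) x₀ (x h t - x₀ - t • ((1/m) • p₀)) := by
          conv_rhs => rw [map_sub, map_smul, map_smul]
        rw [hEq]
        have e1 := (fderiv ℝ (gradient f) x₀).le_opNorm (x h t - x₀ - t • ((1/m) • p₀))
        have e2 := mul_le_mul (hHle x₀) (hBx t ht) (norm_nonneg _) hB0
        have e3 : B * ((C₂ * h) * t) ≤ B * (C₂ * h * h) := by
          apply mul_le_mul_of_nonneg_left ?_ hB0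
          exact mul_le_mul_of_nonneg_left ht.2 (mul_nonneg hC₂pos.le hh.le)
        linarith
      have c3 : ‖p h t - p₀ - t • v₁‖ ≤ C₂ * h * h := by
        refine le_trans (hBp t ht) ?_
        exact mul_le_mul_of_nonneg_left ht.2 (mul_nonneg hC₂pos.le hh.le)
      have c4 : ‖gradient f (x h t) - gradient f x₀‖ ≤ B * (C₁ * h) := hq3 t ht
      have c5 : ‖fderiv ℝ (gradient f) (x h t) (p h t)
          - fderiv ℝ (gradient f) x₀ p₀‖
          ≤ B * (C₁*h) * (Pn + C₁) + B * (C₁*h) := by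
        have hsp : fderiv ℝ (gradient f) (x h t) (p h t) - fderiv ℝ (gradient f) x₀ p₀
            = (fderiv ℝ (gradient f) (x h t) - fderiv ℝ (gradient f) x₀) (p h t)
              + fderiv ℝ (gradient f) x₀ (p h t - p₀) := by
          simp only [ContinuousLinearMap.sub_apply, map_sub]; abel
        rw [hsp]
        have e1 := norm_add_le ((fderiv ℝ (gradient f) (x h t)
          - fderiv ℝ (gradient f) x₀) (p h t)) (fderiv ℝ (gradient f) x₀ (p h t - p₀))
        have e2 := (fderiv ℝ (gradient f) (x h t)
          - fderiv ℝ (gradient f) x₀).le_opNorm (p h t)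
        have e3 : ‖fderiv ℝ (gradient f) (x h t) - fderiv ℝ (gradient f) x₀‖ * ‖p h t‖
            ≤ (B * (C₁*h)) * (Pn + C₁) := by
          apply mul_le_mul ?_ (hq5 t ht) (norm_nonneg _)
            (mul_nonneg hB0 (mul_nonneg hC₁pos.le hh.le))
          exact le_trans (hess_lip hf hB3 _ _) (mul_le_mul_of_nonneg_left (hq1 t ht) hB0)
        have e4 := (fderiv ℝ (gradient f) x₀).le_opNorm (p h t - p₀)
        have e5 : ‖fderiv ℝ (gradient f) x₀‖ * ‖p h t - p₀‖ ≤ B * (C₁ * h) :=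
          mul_le_mul (hHle x₀) (hq2 t ht) (norm_nonneg _) hB0
        linarith
      -- triangle inequality
      have e1 := norm_add_le
        (-(gradient f (x h t) - gradient f x₀ - fderiv ℝ (gradient f) x₀ (x h t - x₀))
          - (fderiv ℝ (gradient f) x₀ (x h t - x₀)
            - t • (1/m) • fderiv ℝ (gradient f) x₀ p₀)
          - γ • (p h t - p₀ - t • v₁)
          - (h*γ/2) • (gradient f (x h t) - gradient f x₀))
        ((h/(2*m)) • (fderiv ℝ (gradient f) (x h t) (p h t)
          - fderiv ℝ (gradient f) x₀ p₀))
      have e2 := norm_sub_le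
        (-(gradient f (x h t) - gradient f x₀ - fderiv ℝ (gradient f) x₀ (x h t - x₀))
          - (fderiv ℝ (gradient f) x₀ (x h t - x₀)
            - t • (1/m) • fderiv ℝ (gradient f) x₀ p₀)
          - γ • (p h t - p₀ - t • v₁))
        ((h*γ/2) • (gradient f (x h t) - gradient f x₀))
      have e3 := norm_sub_le
        (-(gradient f (x h t) - gradient f x₀ - fderiv ℝ (gradient f) x₀ (x h t - x₀))
          - (fderiv ℝ (gradient f) x₀ (x h t - x₀)
            - t • (1/m) • fderiv ℝ (gradient f) x₀ p₀))
        (γ • (p h t - p₀ - t • v₁))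
      have e4 := norm_sub_le
        (-(gradient f (x h t) - gradient f x₀ - fderiv ℝ (gradient f) x₀ (x h t - x₀)))
        (fderiv ℝ (gradient f) x₀ (x h t - x₀)
          - t • (1/m) • fderiv ℝ (gradient f) x₀ p₀)
      rw [norm_neg] at e4
      have k1 : ‖γ • (p h t - p₀ - t • v₁)‖ = γ * ‖p h t - p₀ - t • v₁‖ := by
        rw [norm_smul, Real.norm_eq_abs, abs_of_nonneg hγ]
      have k2 : ‖(h*γ/2) • (gradient f (x h t) - gradient f x₀)‖
          = (h*γ/2) * ‖gradient f (x h t) - gradient f x₀‖ := by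
        rw [norm_smul, Real.norm_eq_abs, abs_of_nonneg hhγ2]
      have k3 : ‖(h/(2*m)) • (fderiv ℝ (gradient f) (x h t) (p h t)
          - fderiv ℝ (gradient f) x₀ p₀)‖
          = (h/(2*m)) * ‖fderiv ℝ (gradient f) (x h t) (p h t)
            - fderiv ℝ (gradient f) x₀ p₀‖ := by
        rw [norm_smul, Real.norm_eq_abs, abs_of_nonneg hh2m]
      have b3 : γ * ‖p h t - p₀ - t • v₁‖ ≤ γ * (C₂ * h * h) :=
        mul_le_mul_of_nonneg_left c3 hγ
      have b4 : (h*γ/2) * ‖gradient f (x h t) - gradient f x₀‖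
          ≤ (h*γ/2) * (B * (C₁ * h)) := mul_le_mul_of_nonneg_left c4 hhγ2
      have b5 : (h/(2*m)) * ‖fderiv ℝ (gradient f) (x h t) (p h t)
          - fderiv ℝ (gradient f) x₀ p₀‖
          ≤ (h/(2*m)) * (B * (C₁*h) * (Pn + C₁) + B * (C₁*h)) :=
        mul_le_mul_of_nonneg_left c5 hh2m
      have hfin : B * (C₁*h)^2 + B * (C₂ * h * h) + γ * (C₂ * h * h)
          + (h*γ/2) * (B * (C₁ * h))
          + (h/(2*m)) * (B * (C₁*h) * (Pn + C₁) + B * (C₁*h)) ≤ C₃ * h^2 := by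
        rw [hC₃def]
        have hh2 : 0 ≤ h^2 := sq_nonneg h
        have w1 : 0 ≤ h^2 * (C₂/m) := mul_nonneg hh2 (div_nonneg hC₂pos.le hm.le)
        have w2 : 0 ≤ h^2 * ((γ*C₁)/(2*m)) :=
          mul_nonneg hh2 (div_nonneg hγC₁ hm2.le)
        have w3 : 0 ≤ h^2 * ((B*C₁)/(2*m)) :=
          mul_nonneg hh2 (div_nonneg hBC₁ hm2.le)
        ring_nf
        ring_nf at w1 w2 w3
        linarith [w1, w2, w3, hh2]
      linarith [e1, e2, e3, e4, k1, k2, k3, b3, b4, b5, c1, c2, hfin]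
    have key := Convex.norm_image_sub_le_of_norm_hasDerivWithin_le hder hbd
      (convex_Icc (0:ℝ) h) h0mem hmemh
    have e0 : p h 0 - p₀ - (0:ℝ) • w - ((0:ℝ)^2/2) • ap = 0 := by rw [hp0]; simp
    rw [e0, sub_zero, sub_zero, Real.norm_eq_abs, abs_of_nonneg hh.le] at key
    exact key
  have hCx : ‖x h h - x₀ - h • u - (h^2/2) • ax‖ ≤ (C₃ * h^2) * h := by
    have hder : ∀ t ∈ Icc (0:ℝ) h, HasDerivWithinAt
        (fun s => x h s - x₀ - s • u - (s^2/2) • ax)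
        (((1 / m) • p h t - (h * γ / (2 * m)) • p h t - (h / (2 * m)) • gradient f (x h t))
          - u - t • ax)
        (Icc 0 h) t := by
      intro t ht
      have h1 := (((hx' t ht).sub_const x₀).sub
        ((hasDerivWithinAt_id t (Icc (0:ℝ) h)).smul_const u)).sub
        (((hasDerivWithinAt_pow 2 t (s := Icc (0:ℝ) h)).div_const 2).smul_const ax)
      exact h1.congr_deriv (by module)
    have hbd : ∀ t ∈ Icc (0:ℝ) h,
        ‖((1 / m) • p h t - (h * γ / (2 * m)) • p h t - (h / (2 * m)) • gradient f (x h t))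
          - u - t • ax‖ ≤ C₃ * h^2 := by
      intro t ht
      have hid : ((1 / m) • p h t - (h * γ / (2 * m)) • p h t
          - (h / (2 * m)) • gradient f (x h t)) - u - t • ax
          = (1/m) • (p h t - p₀ - t • v₁) - (h*γ/(2*m)) • (p h t - p₀)
            - (h/(2*m)) • (gradient f (x h t) - gradient f x₀) := by
        rw [hu, hax, hv₁]; module
      rw [hid]
      have e2 := norm_sub_le ((1/m) • (p h t - p₀ - t • v₁)
        - (h*γ/(2*m)) • (p h t - p₀))
        ((h/(2*m)) • (gradient f (x h t) - gradient f x₀))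
      have e3 := norm_sub_le ((1/m) • (p h t - p₀ - t • v₁))
        ((h*γ/(2*m)) • (p h t - p₀))
      have k1 : ‖(1/m) • (p h t - p₀ - t • v₁)‖ = (1/m) * ‖p h t - p₀ - t • v₁‖ := by
        rw [norm_smul, Real.norm_eq_abs, abs_of_nonneg him]
      have k2 : ‖(h*γ/(2*m)) • (p h t - p₀)‖ = (h*γ/(2*m)) * ‖p h t - p₀‖ := by
        rw [norm_smul, Real.norm_eq_abs, abs_of_nonneg hhγ2m]
      have k3 : ‖(h/(2*m)) • (gradient f (x h t) - gradient f x₀)‖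
          = (h/(2*m)) * ‖gradient f (x h t) - gradient f x₀‖ := by
        rw [norm_smul, Real.norm_eq_abs, abs_of_nonneg hh2m]
      have c3 : ‖p h t - p₀ - t • v₁‖ ≤ C₂ * h * h := by
        refine le_trans (hBp t ht) ?_
        exact mul_le_mul_of_nonneg_left ht.2 (mul_nonneg hC₂pos.le hh.le)
      have b1 : (1/m) * ‖p h t - p₀ - t • v₁‖ ≤ (1/m) * (C₂ * h * h) :=
        mul_le_mul_of_nonneg_left c3 him
      have b2 : (h*γ/(2*m)) * ‖p h t - p₀‖ ≤ (h*γ/(2*m)) * (C₁ * h) :=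
        mul_le_mul_of_nonneg_left (hq2 t ht) hhγ2m
      have b3 : (h/(2*m)) * ‖gradient f (x h t) - gradient f x₀‖
          ≤ (h/(2*m)) * (B * (C₁ * h)) :=
        mul_le_mul_of_nonneg_left (hq3 t ht) hh2m
      have hfin : (1/m) * (C₂ * h * h) + (h*γ/(2*m)) * (C₁ * h)
          + (h/(2*m)) * (B * (C₁ * h)) ≤ C₃ * h^2 := by
        rw [hC₃def]
        have hh2 : 0 ≤ h^2 := sq_nonneg h
        have w1 : 0 ≤ h^2 * (B*C₁^2) := mul_nonneg hh2 (mul_nonneg hB0 (sq_nonneg _))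
        have w2 : 0 ≤ h^2 * (B*C₂) := mul_nonneg hh2 (mul_nonneg hB0 hC₂pos.le)
        have w3 : 0 ≤ h^2 * (γ*C₂) := mul_nonneg hh2 (mul_nonneg hγ hC₂pos.le)
        have w4 : 0 ≤ h^2 * ((γ*B*C₁)/2) := mul_nonneg hh2
          (div_nonneg (mul_nonneg (mul_nonneg hγ hB0) hC₁pos.le) (by norm_num))
        have w5 : 0 ≤ h^2 * ((B*C₁*(Pn + C₁ + 1))/(2*m)) := mul_nonneg hh2
          (div_nonneg (mul_nonneg hBC₁ (by linarith)) hm2.le)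
        ring_nf
        ring_nf at w1 w2 w3 w4 w5
        linarith [w1, w2, w3, w4, w5, hh2]
      linarith [e2, e3, k1, k2, k3, b1, b2, b3, hfin]
    have key := Convex.norm_image_sub_le_of_norm_hasDerivWithin_le hder hbd
      (convex_Icc (0:ℝ) h) h0mem hmemh
    have e0 : x h 0 - x₀ - (0:ℝ) • u - ((0:ℝ)^2/2) • ax = 0 := by rw [hx0]; simp
    rw [e0, sub_zero, sub_zero, Real.norm_eq_abs, abs_of_nonneg hh.le] at key
    exact key
  -- Final assembly
  have hγhnn : 0 ≤ γ * h := mul_nonneg hγ hh.le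
  have habs : |(-(γ*h))| ≤ 1 := by
    rw [abs_neg, abs_of_nonneg hγhnn]; exact hγh
  have hexp3 : |Real.exp (-γ*h) - (1 - γ*h + γ^2*h^2/2)| ≤ γ^3*h^3 := by
    have he : -γ*h = -(γ*h) := by ring
    rw [he]
    have h3 := Real.exp_bound habs (by norm_num : 0 < 3)
    rw [Finset.sum_range_succ, Finset.sum_range_succ, Finset.sum_range_succ,
      Finset.sum_range_zero] at h3
    norm_num [Nat.factorial] at h3
    rw [abs_of_nonneg hγ, abs_of_nonneg hh.le] at h3
    have hb1 : (1 + -(γ*h) + (γ*h)^2/2) = 1 - γ*h + γ^2*h^2/2 := by ring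
    rw [hb1] at h3
    have e1 : 0 ≤ (γ*h)^3 := pow_nonneg hγhnn 3
    have e2 : (γ*h)^3 = γ^3*h^3 := by ring
    linarith
  have hexp2 : |Real.exp (-γ*h) - (1 - γ*h)| ≤ γ^2*h^2 := by
    have he : -γ*h = -(γ*h) := by ring
    rw [he]
    have h3 := Real.exp_bound habs (by norm_num : 0 < 2)
    rw [Finset.sum_range_succ, Finset.sum_range_succ, Finset.sum_range_zero] at h3
    norm_num [Nat.factorial] at h3
    rw [abs_of_nonneg hγ, abs_of_nonneg hh.le] at h3
    have hb1 : (1 + -(γ*h)) = 1 - γ*h := by ring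
    rw [hb1] at h3
    have e1 : 0 ≤ (γ*h)^2 := sq_nonneg _
    have e2 : (γ*h)^2 = γ^2*h^2 := by ring
    linarith
  have hPerr : ‖(Real.exp (-γ*h) • p₀ - h • gradient f x₀) - p h h‖
      ≤ (C₃*h^2)*h + γ^3*h^3*Pn := by
    have hsp : (Real.exp (-γ*h) • p₀ - h • gradient f x₀) - p h h
        = (Real.exp (-γ*h) - (1 - γ*h + γ^2*h^2/2)) • p₀
          - (p h h - p₀ - h • w - (h^2/2) • ap) := by
      rw [hw, hap]; module
    rw [hsp]
    have e1 := norm_sub_le ((Real.exp (-γ*h) - (1 - γ*h + γ^2*h^2/2)) • p₀)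
      (p h h - p₀ - h • w - (h^2/2) • ap)
    have e2 : ‖(Real.exp (-γ*h) - (1 - γ*h + γ^2*h^2/2)) • p₀‖ ≤ γ^3*h^3*Pn := by
      rw [norm_smul, Real.norm_eq_abs, ← hPndef]
      exact mul_le_mul_of_nonneg_right hexp3 hPn0
    linarith [hCp]
  have hXerr : ‖(x₀ + (h/m) • (Real.exp (-γ*h) • p₀ - h • gradient f x₀)) - x h h‖
      ≤ (C₃*h^2)*h + ((γ^2*Pn)/m)*h^3 := by
    have hsp : (x₀ + (h/m) • (Real.exp (-γ*h) • p₀ - h • gradient f x₀)) - x h h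
        = ((h/m) * (Real.exp (-γ*h) - (1 - γ*h))) • p₀
          - (x h h - x₀ - h • u - (h^2/2) • ax) := by
      rw [hu, hax]; module
    rw [hsp]
    have e1 := norm_sub_le (((h/m) * (Real.exp (-γ*h) - (1 - γ*h))) • p₀)
      (x h h - x₀ - h • u - (h^2/2) • ax)
    have hhm : 0 ≤ h/m := div_nonneg hh.le hm.le
    have e2 : ‖((h/m) * (Real.exp (-γ*h) - (1 - γ*h))) • p₀‖ ≤ ((γ^2*Pn)/m)*h^3 := by
      rw [norm_smul, Real.norm_eq_abs, ← hPndef, abs_mul, abs_of_nonneg hhm]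
      have e3 : (h/m) * |Real.exp (-γ*h) - (1 - γ*h)| ≤ (h/m) * (γ^2*h^2) :=
        mul_le_mul_of_nonneg_left hexp2 hhm
      have e4 : ((h/m) * (γ^2*h^2)) * Pn = ((γ^2*Pn)/m)*h^3 := by ring
      have e5 : (h/m) * |Real.exp (-γ*h) - (1 - γ*h)| * Pn
          ≤ ((h/m) * (γ^2*h^2)) * Pn := mul_le_mul_of_nonneg_right e3 hPn0
      linarith
    linarith [hCx]
  have hfinal := add_le_add hXerr hPerr
  rw [hCdef]
  have hh3 : 0 ≤ h^3 := by positivity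
  ring_nf at hfinal ⊢
  linarith [hfinal, hh3]
end

section
/- Fix λ > 0, m > 0, h > 0, γ ≥ 0, and set μ = e^{−γh} and s = 1 − h²λ/m. Consider the 2 × 2 transition matrix of Nesterov's method applied to the quadratic f(x) = (λ/2)x²: T_NAG = [[s, (h/m) μ s], [−hλ, μ s]]. Then: (i) det T_NAG = μ s = e^{−γh}(1 − h²λ/m); and (ii) every non-real complex eigenvalue z of T_NAG lies on the circle centered at μ/(1+μ) of radius μ/(1+μ), i.e., |z − μ/(1+μ)| = μ/(1+μ) = 1/(e^{γh} + 1). -/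
/-- for the quadratic `f(x) = (λ/2)x²`, the Nesterov transition
matrix `T_NAG = [[s, (h/m)μs], [−hλ, μs]]`, with `μ = e^{−γh}` and
`s = 1 − h²λ/m`, satisfies (i) `det T_NAG = μs`, and (ii) every non-real
complex eigenvalue `z` of `T_NAG` lies on the circle centered at `μ/(1+μ)`
of radius `μ/(1+μ) = 1/(e^{γh} + 1)`. -/
theorem nesterov_transition_matrix_spectrum
    (lam m h γ : ℝ) (hlam : 0 < lam) (hm : 0 < m) (hh : 0 < h) (hγ : 0 ≤ γ)
    (μ s : ℝ) (hμ : μ = Real.exp (-γ * h)) (hs : s = 1 - h ^ 2 * lam / m)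
    (T : Matrix (Fin 2) (Fin 2) ℝ)
    (hT : T = !![s, (h / m) * μ * s; -h * lam, μ * s]) :
    T.det = μ * s
    ∧ μ / (1 + μ) = 1 / (Real.exp (γ * h) + 1)
    ∧ ∀ z : ℂ,
        (z • (1 : Matrix (Fin 2) (Fin 2) ℂ) - T.map (fun r : ℝ => (r : ℂ))).det = 0 →
        z.im ≠ 0 →
        ‖z - ((μ / (1 + μ) : ℝ) : ℂ)‖ = μ / (1 + μ) := by
  have hμpos : 0 < μ := hμ ▸ Real.exp_pos _
  have h1μ : (0:ℝ) < 1 + μ := by linarith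
  have hmE : μ * Real.exp (γ * h) = 1 := by
    rw [hμ, ← Real.exp_add]; ring_nf; exact Real.exp_zero
  have hsdet : s ^ 2 * μ + h ^ 2 * lam / m * μ * s = μ * s := by
    rw [hs]; field_simp; ring
  refine ⟨?_, ?_, ?_⟩
  · subst hT
    rw [Matrix.det_fin_two_of, hs]
    field_simp
    ring
  · have hE : (0:ℝ) < Real.exp (γ * h) := Real.exp_pos _
    field_simp
    nlinarith [hmE]
  · intro z hz him
    subst hT
    -- compute determinant equation
    have hz' : z ^ 2 - (s * (1 + μ) : ℝ) * z + (μ * s : ℝ) = 0 := by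
      have : (z • (1 : Matrix (Fin 2) (Fin 2) ℂ) -
          (!![s, (h / m) * μ * s; -h * lam, μ * s] : Matrix (Fin 2) (Fin 2) ℝ).map
            (fun r : ℝ => (r : ℂ))).det
          = z ^ 2 - (s * (1 + μ) : ℝ) * z + (μ * s : ℝ) := by
        rw [show (z • (1 : Matrix (Fin 2) (Fin 2) ℂ) -
            (!![s, (h / m) * μ * s; -h * lam, μ * s] : Matrix (Fin 2) (Fin 2) ℝ).map
              (fun r : ℝ => (r : ℂ))) =
            !![z - s, -((h / m) * μ * s : ℝ); -(-h * lam : ℝ), z - (μ * s : ℝ)] from by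
          ext i j; fin_cases i <;> fin_cases j <;>
            simp [Matrix.one_apply] ]
        rw [Matrix.det_fin_two_of]
        have : ((s:ℂ) ^ 2 * μ + (h:ℂ) ^ 2 * lam / m * μ * s) = (μ:ℂ) * s := by
          exact_mod_cast congrArg (fun r : ℝ => (r : ℂ)) hsdet
        push_cast
        have hm0 : (m:ℂ) ≠ 0 := by exact_mod_cast hm.ne'
        field_simp at this ⊢
        linear_combination this
      rw [this] at hz
      exact hz
    set a := z.re with ha
    set b := z.im with hb
    have him2 : (z ^ 2 - (s * (1 + μ) : ℝ) * z + (μ * s : ℝ)).im = 0 := by rw [hz']; rfl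
    have hre2 : (z ^ 2 - (s * (1 + μ) : ℝ) * z + (μ * s : ℝ)).re = 0 := by rw [hz']; rfl
    simp [Complex.ext_iff, pow_two, Complex.mul_re, Complex.mul_im, ← ha, ← hb] at him2 hre2
    have haeq : a = s * (1 + μ) / 2 := by
      have h2 : (2 * a - s * (1 + μ)) * b = 0 := by ring_nf; linarith [him2]
      rcases mul_eq_zero.mp h2 with h' | h'
      · linarith
      · exact absurd h' him
    have hD : a ^ 2 + b ^ 2 = μ * s := by linear_combination (-1) * hre2 + 2 * a * haeq
    set c : ℝ := μ / (1 + μ) with hc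
    have hcT : c * (s * (1 + μ)) = μ * s := by
      rw [hc]; field_simp
    have habs : (‖z - (c : ℂ)‖) ^ 2 = c ^ 2 := by
      rw [Complex.sq_norm, Complex.normSq_apply]
      simp only [Complex.sub_re, Complex.sub_im, Complex.ofReal_re, Complex.ofReal_im,
        sub_zero, ← ha, ← hb]
      linear_combination hD - 2 * c * haeq - hcT
    have hcnn : 0 ≤ c := by positivity
    nlinarith [habs, norm_nonneg (z - (c : ℂ)), hcnn,
      sq_nonneg (‖z - (c : ℂ)‖ - c)]
end

section
/- Fix λ > 0, m > 0, h > 0, γ ≥ 0, and set μ = e^{−γh}. Consider the 2 × 2 transition matrices of the heavy-ball and RGD (with c → ∞, α = 1) methods applied to f(x) = (λ/2)x²: T_CM = [[1 − h²λ/m, (h/m) μ], [−hλ, μ]] and T_RGD = [[1 − h²λ/(2m), (h/(2m)) √μ (2 − h²λ/(2m))], [−hλ √μ, μ (1 − h²λ/(2m))]]. Then det T_CM = det T_RGD = μ = e^{−γh}, and consequently every non-real complex eigenvalue of T_CM, and every non-real complex eigenvalue of T_RGD, has modulus exactly √μ = e^{−γh/2}; i.e., both conformal symplectic methods exactly preserve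 the dissipation rate of the continuous system in their linear spectrum. -/
/-- If `z` satisfies a monic real quadratic `z² - t z + D = 0` and is non-real,
then `|z|² = D`, so `|z| = √D`. -/
lemma quad_nonreal_abs (t D : ℝ) (z : ℂ)
    (hz : z ^ 2 - (t : ℂ) * z + (D : ℂ) = 0) (him : z.im ≠ 0) :
    ‖z‖ = Real.sqrt D := by
  have him' : z.re * z.im + z.im * z.re - t * z.im = 0 := by
    have := congrArg Complex.im hz
    simpa [Complex.ext_iff, pow_two, Complex.mul_im, Complex.mul_re] using this
  have hre : z.re = t / 2 := by
    have h2 : z.im * (2 * z.re - t) = 0 := by linear_combination him'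
    rcases mul_eq_zero.mp h2 with h | h
    · exact absurd h him
    · linarith
  have hre' : z.re ^ 2 - z.im ^ 2 - t * z.re + D = 0 := by
    have := congrArg Complex.re hz
    simp [Complex.ext_iff, pow_two, Complex.mul_im, Complex.mul_re] at this
    nlinarith [this]
  have hnorm : Complex.normSq z = D := by
    simp only [Complex.normSq_apply]
    linear_combination -hre' + (2 * z.re) * hre
  rw [← Complex.sq_norm] at hnorm
  rw [← hnorm, Real.sqrt_sq (norm_nonneg z)]

/-- The characteristic equation of a real 2×2 matrix, complexified. -/
lemma char_fact (a b c d : ℝ) (z : ℂ)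
    (hz : (z • (1 : Matrix (Fin 2) (Fin 2) ℂ)
        - (!![a, b; c, d]).map (fun r : ℝ => (r : ℂ))).det = 0) :
    z ^ 2 - ((a + d : ℝ) : ℂ) * z + ((a * d - b * c : ℝ) : ℂ) = 0 := by
  simp [Matrix.det_fin_two, Matrix.map_apply, Matrix.smul_apply, Matrix.one_apply] at hz
  push_cast
  linear_combination hz

/-- for the quadratic `f(x) = (λ/2)x²`, the heavy-ball and RGD
(`c → ∞`, `α = 1`) transition matrices both have determinant `μ = e^{−γh}`,
so every non-real complex eigenvalue of either matrix has modulus exactly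
`√μ = e^{−γh/2}`: both conformal symplectic methods exactly preserve the
dissipation rate of the continuous system in their linear spectrum. -/
theorem conformal_symplectic_transition_matrices_spectrum
    (lam m h γ : ℝ) (hlam : 0 < lam) (hm : 0 < m) (hh : 0 < h) (hγ : 0 ≤ γ)
    (μ : ℝ) (hμ : μ = Real.exp (-γ * h))
    (Tcm Trgd : Matrix (Fin 2) (Fin 2) ℝ)
    (hTcm : Tcm = !![1 - h ^ 2 * lam / m, (h / m) * μ; -h * lam, μ])
    (hTrgd : Trgd = !![1 - h ^ 2 * lam / (2 * m),
        (h / (2 * m)) * Real.sqrt μ * (2 - h ^ 2 * lam / (2 * m));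
        -h * lam * Real.sqrt μ, μ * (1 - h ^ 2 * lam / (2 * m))]) :
    Tcm.det = μ
    ∧ Trgd.det = μ
    ∧ Real.sqrt μ = Real.exp (-γ * h / 2)
    ∧ (∀ z : ℂ,
        (z • (1 : Matrix (Fin 2) (Fin 2) ℂ) - Tcm.map (fun r : ℝ => (r : ℂ))).det = 0 →
        z.im ≠ 0 → ‖z‖ = Real.sqrt μ)
    ∧ (∀ z : ℂ,
        (z • (1 : Matrix (Fin 2) (Fin 2) ℂ) - Trgd.map (fun r : ℝ => (r : ℂ))).det = 0 →
        z.im ≠ 0 → ‖z‖ = Real.sqrt μ) := by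
  have hμpos : 0 < μ := hμ ▸ Real.exp_pos _
  have hsq : Real.sqrt μ * Real.sqrt μ = μ := Real.mul_self_sqrt hμpos.le
  have hm0 : m ≠ 0 := hm.ne'
  have e1 : (1 - h ^ 2 * lam / m) * μ - ((h / m) * μ) * (-h * lam) = μ := by
    field_simp; ring
  have e2 : (1 - h ^ 2 * lam / (2 * m)) * (μ * (1 - h ^ 2 * lam / (2 * m)))
      - ((h / (2 * m)) * Real.sqrt μ * (2 - h ^ 2 * lam / (2 * m)))
        * (-h * lam * Real.sqrt μ) = μ := by
    field_simp
    linear_combination (h ^ 2 * lam * (2 * (2 * m) - h ^ 2 * lam)) * hsq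
  have hdet1 : Tcm.det = μ := by
    rw [hTcm, Matrix.det_fin_two_of]; linear_combination e1
  have hdet2 : Trgd.det = μ := by
    rw [hTrgd, Matrix.det_fin_two_of]; linear_combination e2
  refine ⟨hdet1, hdet2, ?_, ?_, ?_⟩
  · rw [hμ, ← Real.exp_half]
  · intro z hz him
    rw [hTcm] at hz
    have := char_fact _ _ _ _ z hz
    rw [show (1 - h ^ 2 * lam / m) * μ - (h / m) * μ * (-h * lam) = μ from e1] at this
    exact quad_nonreal_abs _ _ _ this him
  · intro z hz him
    rw [hTrgd] at hz
    have := char_fact _ _ _ _ z hz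
    rw [show (1 - h ^ 2 * lam / (2 * m)) * (μ * (1 - h ^ 2 * lam / (2 * m)))
      - (h / (2 * m)) * Real.sqrt μ * (2 - h ^ 2 * lam / (2 * m))
        * (-h * lam * Real.sqrt μ) = μ from e2] at this
    exact quad_nonreal_abs _ _ _ this him
end
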